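/- arXiv:2301.05956 — 2 statements merged into one kernel-verified Lean document; each statement's English description precedes it below -/
import Mathlib

section
/- If L is a nonempty linear order in dLO_fp¹⁰ (discrete, finitely presented, with a minimum element and with no maximum element), then there exist L₂ ∈ dLO_fp¹¹ and L₁ ∈ dLO_fp¹¹ ∪ {𝟎} such that L ≅ L₁ + L₂·ω. -/
/-- Bundled linear orders (in `Type 0`). -/
structure BLinOrd : Type 1 where
  carrier : Type
  [str : LinearOrder carrier]

attribute [instance] BLinOrd.str

/-- The bundled linear order on a given type. -/
def BLinOrd.of (α : Type) [LinearOrder α] : BLinOrd := ⟨α⟩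

/-- The class of finitely presented linear orders: the smallest class of linear orders
containing `𝟎` and `𝟏` that is closed under order isomorphism, binary order sums,
and the anti-lexicographic products `L·ω` and `L·ω*`. -/
inductive LOfp : BLinOrd → Prop
  | empty : LOfp (BLinOrd.of (Fin 0))
  | one : LOfp (BLinOrd.of (Fin 1))
  | iso {X Y : BLinOrd} : LOfp X → Nonempty (X.carrier ≃o Y.carrier) → LOfp Y
  | add {X Y : BLinOrd} : LOfp X → LOfp Y → LOfp (BLinOrd.of (X.carrier ⊕ₗ Y.carrier))
  | mulOmega {X : BLinOrd} : LOfp X → LOfp (BLinOrd.of (ℕ ×ₗ X.carrier))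
  | mulOmegaStar {X : BLinOrd} : LOfp X → LOfp (BLinOrd.of (ℕᵒᵈ ×ₗ X.carrier))

/-- A linear order is discrete if every non-maximal element has an immediate successor
and every non-minimal element has an immediate predecessor. -/
def IsDiscreteLO (α : Type*) [LinearOrder α] : Prop :=
  (∀ a : α, (∃ b, a < b) → ∃ b, a ⋖ b) ∧ (∀ a : α, (∃ b, b < a) → ∃ b, b ⋖ a)

/-- Bounded discrete finitely presented linear orders: discrete members of `LOfp` with a
minimum element and a maximum element. -/
def dLOfp11 (X : BLinOrd) : Prop :=
  LOfp X ∧ IsDiscreteLO X.carrier ∧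
    (∃ a : X.carrier, ∀ x, a ≤ x) ∧ (∃ a : X.carrier, ∀ x, x ≤ a)


namespace DLO


variable {α β γ δ : Type} [LinearOrder α] [LinearOrder β] [LinearOrder γ] [LinearOrder δ]
variable {ι : Type} [LinearOrder ι]

open OrderDual (toDual ofDual)

def HMin (α : Type) [LinearOrder α] : Prop := ∃ m : α, ∀ x, m ≤ x
def HMax (α : Type) [LinearOrder α] : Prop := ∃ m : α, ∀ x, x ≤ m

/-! ### transfer along order isos -/

theorem hmin_iso (e : α ≃o β) (h : HMin α) : HMin β := by
  obtain ⟨m, hm⟩ := h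
  refine ⟨e m, fun x => ?_⟩
  have h1 : e (e.symm x) = x := e.apply_symm_apply x
  calc e m ≤ e (e.symm x) := e.le_iff_le.2 (hm _)
    _ = x := h1

theorem hmax_iso (e : α ≃o β) (h : HMax α) : HMax β := by
  obtain ⟨m, hm⟩ := h
  refine ⟨e m, fun x => ?_⟩
  have h1 : e (e.symm x) = x := e.apply_symm_apply x
  calc x = e (e.symm x) := h1.symm
    _ ≤ e m := e.le_iff_le.2 (hm _)

theorem covBy_iso (e : α ≃o β) {a b : α} (h : a ⋖ b) : e a ⋖ e b := by
  constructor
  · exact e.lt_iff_lt.2 h.1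
  · intro c h1 h2
    have p1 : a < e.symm c := by have := e.symm.lt_iff_lt.2 h1; simpa using this
    have p2 : e.symm c < b := by have := e.symm.lt_iff_lt.2 h2; simpa using this
    exact h.2 p1 p2

theorem disc_iso (e : α ≃o β) (h : IsDiscreteLO α) : IsDiscreteLO β := by
  obtain ⟨hs, hp⟩ := h
  constructor
  · rintro b ⟨c, hc⟩
    obtain ⟨d, hd⟩ := hs (e.symm b) ⟨e.symm c, e.symm.lt_iff_lt.2 hc⟩
    exact ⟨e d, by simpa using covBy_iso e hd⟩
  · rintro b ⟨c, hc⟩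
    obtain ⟨d, hd⟩ := hp (e.symm b) ⟨e.symm c, e.symm.lt_iff_lt.2 hc⟩
    exact ⟨e d, by simpa using covBy_iso e hd⟩





/-! ### sum basics -/

theorem hmin_sum_left (h : HMin α) : HMin (α ⊕ₗ β) := by
  obtain ⟨m, hm⟩ := h
  refine ⟨toLex (Sum.inl m), fun x => ?_⟩
  rcases x with a | b
  · exact Sum.Lex.inl_le_inl_iff.2 (hm a)
  · exact Sum.Lex.inl_le_inr m b

theorem hmin_sum_right (he : IsEmpty α) (h : HMin β) : HMin (α ⊕ₗ β) := by
  obtain ⟨m, hm⟩ := h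
  refine ⟨toLex (Sum.inr m), fun x => ?_⟩
  rcases x with a | b
  · exact he.elim a
  · exact Sum.Lex.inr_le_inr_iff.2 (hm b)

theorem hmax_sum_right (h : HMax β) : HMax (α ⊕ₗ β) := by
  obtain ⟨m, hm⟩ := h
  refine ⟨toLex (Sum.inr m), fun x => ?_⟩
  rcases x with a | b
  · exact Sum.Lex.inl_le_inr a m
  · exact Sum.Lex.inr_le_inr_iff.2 (hm b)

theorem hmax_sum_left (he : IsEmpty β) (h : HMax α) : HMax (α ⊕ₗ β) := by
  obtain ⟨m, hm⟩ := h
  refine ⟨toLex (Sum.inl m), fun x => ?_⟩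
  rcases x with a | b
  · exact Sum.Lex.inl_le_inl_iff.2 (hm a)
  · exact he.elim b

theorem hmin_sum_inv (h : HMin (α ⊕ₗ β)) (hne : Nonempty α) : HMin α := by
  obtain ⟨m, hm⟩ := h
  rcases m with a | b
  · exact ⟨a, fun x => Sum.Lex.inl_le_inl_iff.1 (hm (toLex (Sum.inl x)))⟩
  · exact absurd (hm (toLex (Sum.inl hne.some))) Sum.Lex.not_inr_le_inl

theorem hmax_sum_inv (h : HMax (α ⊕ₗ β)) (hne : Nonempty β) : HMax β := by
  obtain ⟨m, hm⟩ := h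
  rcases m with a | b
  · exact absurd (hm (toLex (Sum.inr hne.some))) Sum.Lex.not_inr_le_inl
  · exact ⟨b, fun x => Sum.Lex.inr_le_inr_iff.1 (hm (toLex (Sum.inr x)))⟩

theorem covBy_inl {a b : α} (h : a ⋖ b) : (toLex (Sum.inl a) : α ⊕ₗ β) ⋖ toLex (Sum.inl b) := by
  refine ⟨Sum.Lex.inl_lt_inl_iff.2 h.1, fun c h1 h2 => ?_⟩
  rcases c with c | c
  · exact h.2 (Sum.Lex.inl_lt_inl_iff.1 h1) (Sum.Lex.inl_lt_inl_iff.1 h2)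
  · exact Sum.Lex.not_inr_lt_inl h2

theorem covBy_inr {a b : β} (h : a ⋖ b) : (toLex (Sum.inr a) : α ⊕ₗ β) ⋖ toLex (Sum.inr b) := by
  refine ⟨Sum.Lex.inr_lt_inr_iff.2 h.1, fun c h1 h2 => ?_⟩
  rcases c with c | c
  · exact Sum.Lex.not_inr_lt_inl h1
  · exact h.2 (Sum.Lex.inr_lt_inr_iff.1 h1) (Sum.Lex.inr_lt_inr_iff.1 h2)

theorem covBy_inl_inr {a : α} {b : β} (ha : ∀ x, x ≤ a) (hb : ∀ y, b ≤ y) :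
    (toLex (Sum.inl a) : α ⊕ₗ β) ⋖ toLex (Sum.inr b) := by
  refine ⟨Sum.Lex.inl_lt_inr a b, fun c h1 h2 => ?_⟩
  rcases c with c | c
  · exact absurd (Sum.Lex.inl_lt_inl_iff.1 h1) (not_lt.2 (ha c))
  · exact absurd (Sum.Lex.inr_lt_inr_iff.1 h2) (not_lt.2 (hb c))

/-- gluing discreteness of a lexicographic sum -/
theorem disc_sum (ha : IsDiscreteLO α) (hb : IsDiscreteLO β)
    (hj : IsEmpty α ∨ IsEmpty β ∨ (HMax α ↔ HMin β)) : IsDiscreteLO (α ⊕ₗ β) := by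
  constructor
  · rintro x ⟨y, hy⟩
    rcases x with a | b
    · by_cases hmax : ∃ c, a < c
      · obtain ⟨c, hc⟩ := ha.1 a hmax
        exact ⟨toLex (Sum.inl c), covBy_inl hc⟩
      · -- a is the max of α; y must be inr
        have hamax : ∀ x : α, x ≤ a := fun x => not_lt.1 fun h => hmax ⟨x, h⟩
        rcases y with c | c
        · exact absurd (Sum.Lex.inl_lt_inl_iff.1 hy) (not_lt.2 (hamax c))
        · have hbne : Nonempty β := ⟨c⟩
          have hane : Nonempty α := ⟨a⟩
          rcases hj with h | h | h
          · exact h.elim a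
          · exact h.elim c
          · obtain ⟨m, hm⟩ := h.1 ⟨a, hamax⟩
            exact ⟨toLex (Sum.inr m), covBy_inl_inr hamax hm⟩
    · have : ∃ c, b < c := by
        rcases y with c | c
        · exact absurd hy Sum.Lex.not_inr_lt_inl
        · exact ⟨c, Sum.Lex.inr_lt_inr_iff.1 hy⟩
      obtain ⟨c, hc⟩ := hb.1 b this
      exact ⟨toLex (Sum.inr c), covBy_inr hc⟩
  · rintro x ⟨y, hy⟩
    rcases x with a | b
    · have : ∃ c, c < a := by
        rcases y with c | c
        · exact ⟨c, Sum.Lex.inl_lt_inl_iff.1 hy⟩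
        · exact absurd hy Sum.Lex.not_inr_lt_inl
      obtain ⟨c, hc⟩ := ha.2 a this
      exact ⟨toLex (Sum.inl c), covBy_inl hc⟩
    · by_cases hminb : ∃ c, c < b
      · obtain ⟨c, hc⟩ := hb.2 b hminb
        exact ⟨toLex (Sum.inr c), covBy_inr hc⟩
      · have hbmin : ∀ x : β, b ≤ x := fun x => not_lt.1 fun h => hminb ⟨x, h⟩
        rcases y with c | c
        · have hane : Nonempty α := ⟨c⟩
          have hbne : Nonempty β := ⟨b⟩
          rcases hj with h | h | h
          · exact h.elim c
          · exact h.elim b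
          · obtain ⟨m, hm⟩ := h.2 ⟨b, hbmin⟩
            exact ⟨toLex (Sum.inl m), covBy_inl_inr hm hbmin⟩
        · exact absurd (Sum.Lex.inr_lt_inr_iff.1 hy) (not_lt.2 (hbmin c))

theorem disc_sum_left (h : IsDiscreteLO (α ⊕ₗ β)) : IsDiscreteLO α := by
  constructor
  · rintro a ⟨b, hb⟩
    obtain ⟨y, hy⟩ := h.1 (toLex (Sum.inl a)) ⟨toLex (Sum.inl b), Sum.Lex.inl_lt_inl_iff.2 hb⟩
    have hyb : y ≤ toLex (Sum.inl b) := by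
      by_contra hlt
      exact hy.2 (Sum.Lex.inl_lt_inl_iff.2 hb) (not_le.1 hlt)
    rcases y with c | c
    · refine ⟨c, Sum.Lex.inl_lt_inl_iff.1 hy.1, fun d h1 h2 => ?_⟩
      exact hy.2 (Sum.Lex.inl_lt_inl_iff.2 h1) (Sum.Lex.inl_lt_inl_iff.2 h2)
    · exact absurd hyb Sum.Lex.not_inr_le_inl
  · rintro a ⟨b, hb⟩
    obtain ⟨y, hy⟩ := h.2 (toLex (Sum.inl a)) ⟨toLex (Sum.inl b), Sum.Lex.inl_lt_inl_iff.2 hb⟩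
    rcases y with c | c
    · refine ⟨c, Sum.Lex.inl_lt_inl_iff.1 hy.1, fun d h1 h2 => ?_⟩
      exact hy.2 (Sum.Lex.inl_lt_inl_iff.2 h1) (Sum.Lex.inl_lt_inl_iff.2 h2)
    · exact absurd hy.1 Sum.Lex.not_inr_lt_inl

theorem disc_sum_right (h : IsDiscreteLO (α ⊕ₗ β)) : IsDiscreteLO β := by
  constructor
  · rintro a ⟨b, hb⟩
    obtain ⟨y, hy⟩ := h.1 (toLex (Sum.inr a)) ⟨toLex (Sum.inr b), Sum.Lex.inr_lt_inr_iff.2 hb⟩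
    rcases y with c | c
    · exact absurd hy.1 Sum.Lex.not_inr_lt_inl
    · refine ⟨c, Sum.Lex.inr_lt_inr_iff.1 hy.1, fun d h1 h2 => ?_⟩
      exact hy.2 (Sum.Lex.inr_lt_inr_iff.2 h1) (Sum.Lex.inr_lt_inr_iff.2 h2)
  · rintro a ⟨b, hb⟩
    obtain ⟨y, hy⟩ := h.2 (toLex (Sum.inr a)) ⟨toLex (Sum.inr b), Sum.Lex.inr_lt_inr_iff.2 hb⟩
    have hyb : toLex (Sum.inr b) ≤ y := by
      by_contra hlt
      exact hy.2 (not_le.1 hlt) (Sum.Lex.inr_lt_inr_iff.2 hb)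
    rcases y with c | c
    · exact absurd hyb Sum.Lex.not_inr_le_inl
    · refine ⟨c, Sum.Lex.inr_lt_inr_iff.1 hy.1, fun d h1 h2 => ?_⟩
      exact hy.2 (Sum.Lex.inr_lt_inr_iff.2 h1) (Sum.Lex.inr_lt_inr_iff.2 h2)

/-- junction: if the sum is discrete, α has a max and β is nonempty then β has a min. -/
theorem sum_hmin_right (h : IsDiscreteLO (α ⊕ₗ β)) (ha : HMax α) (hb : Nonempty β) : HMin β := by
  obtain ⟨m, hm⟩ := ha
  obtain ⟨y, hy⟩ := h.1 (toLex (Sum.inl m)) ⟨toLex (Sum.inr hb.some), Sum.Lex.inl_lt_inr _ _⟩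
  rcases y with c | c
  · exact absurd (Sum.Lex.inl_lt_inl_iff.1 hy.1) (not_lt.2 (hm c))
  · refine ⟨c, fun x => ?_⟩
    by_contra hlt
    exact hy.2 (Sum.Lex.inl_lt_inr _ _) (Sum.Lex.inr_lt_inr_iff.2 (not_le.1 hlt))

/-- junction: if the sum is discrete, β has a min and α is nonempty then α has a max. -/
theorem sum_hmax_left (h : IsDiscreteLO (α ⊕ₗ β)) (ha : Nonempty α) (hb : HMin β) : HMax α := by
  obtain ⟨m, hm⟩ := hb
  obtain ⟨y, hy⟩ := h.2 (toLex (Sum.inr m)) ⟨toLex (Sum.inl ha.some), Sum.Lex.inl_lt_inr _ _⟩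
  rcases y with c | c
  · refine ⟨c, fun x => ?_⟩
    by_contra hlt
    exact hy.2 (Sum.Lex.inl_lt_inl_iff.2 (not_le.1 hlt)) (Sum.Lex.inl_lt_inr _ _)
  · exact absurd (Sum.Lex.inr_lt_inr_iff.1 hy.1) (not_lt.2 (hm c))






theorem plt_iff {n m : ι} {a b : α} :
    (toLex (n, a) : ι ×ₗ α) < toLex (m, b) ↔ n < m ∨ (n = m ∧ a < b) := Prod.Lex.lt_iff

theorem ple_iff {n m : ι} {a b : α} :
    (toLex (n, a) : ι ×ₗ α) ≤ toLex (m, b) ↔ n < m ∨ (n = m ∧ a ≤ b) := Prod.Lex.le_iff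

theorem dual_lt {n m : ℕᵒᵈ} : n < m ↔ ofDual m < ofDual n := Iff.rfl
theorem dual_eq {n m : ℕᵒᵈ} : n = m ↔ ofDual n = ofDual m := Iff.rfl

theorem hmin_natProd (h : HMin α) : HMin (ℕ ×ₗ α) := by
  obtain ⟨m, hm⟩ := h
  refine ⟨toLex (0, m), fun x => ?_⟩
  obtain ⟨n, a⟩ := x
  rcases Nat.eq_zero_or_pos n with rfl | hn
  · exact ple_iff.2 (Or.inr ⟨rfl, hm a⟩)
  · exact ple_iff.2 (Or.inl hn)

theorem hmax_natDualProd (h : HMax α) : HMax (ℕᵒᵈ ×ₗ α) := by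
  obtain ⟨m, hm⟩ := h
  refine ⟨toLex (toDual 0, m), fun x => ?_⟩
  obtain ⟨n, a⟩ := x
  rcases Nat.eq_zero_or_pos (ofDual n) with h0 | hn
  · refine ple_iff.2 (Or.inr ⟨dual_eq.2 h0, hm a⟩)
  · exact ple_iff.2 (Or.inl (dual_lt.2 hn))

theorem nomax_natProd (x : ℕ ×ₗ α) : ∃ y, x < y := by
  obtain ⟨n, a⟩ := x
  exact ⟨toLex (n + 1, a), plt_iff.2 (Or.inl (Nat.lt_succ_self n))⟩

theorem nomin_natDualProd (x : ℕᵒᵈ ×ₗ α) : ∃ y, y < x := by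
  obtain ⟨n, a⟩ := x
  exact ⟨toLex (toDual (ofDual n + 1), a), plt_iff.2 (Or.inl (dual_lt.2 (Nat.lt_succ_self _)))⟩

theorem nomin_natProd (h : ∀ a : α, ∃ b, b < a) (x : ℕ ×ₗ α) : ∃ y, y < x := by
  obtain ⟨n, a⟩ := x
  obtain ⟨b, hb⟩ := h a
  exact ⟨toLex (n, b), plt_iff.2 (Or.inr ⟨rfl, hb⟩)⟩

theorem hmin_natProd_inv (h : HMin (ℕ ×ₗ α)) : HMin α := by
  obtain ⟨m, hm⟩ := h
  obtain ⟨n, a⟩ := m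
  refine ⟨a, fun x => ?_⟩
  rcases ple_iff.1 (hm (toLex (n, x))) with h | h
  · exact absurd h (lt_irrefl n)
  · exact h.2

theorem hmax_natDualProd_inv (h : HMax (ℕᵒᵈ ×ₗ α)) : HMax α := by
  obtain ⟨m, hm⟩ := h
  obtain ⟨n, a⟩ := m
  refine ⟨a, fun x => ?_⟩
  rcases ple_iff.1 (hm (toLex (n, x))) with h | h
  · exact absurd h (lt_irrefl n)
  · exact h.2

theorem covBy_block {n : ι} {a b : α} (h : a ⋖ b) :
    (toLex (n, a) : ι ×ₗ α) ⋖ toLex (n, b) := by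
  refine ⟨plt_iff.2 (Or.inr ⟨rfl, h.1⟩), fun c h1 h2 => ?_⟩
  obtain ⟨m, d⟩ := c
  rcases plt_iff.1 h1 with h1' | ⟨rfl, h1'⟩ <;> rcases plt_iff.1 h2 with h2' | ⟨he, h2'⟩
  · exact absurd (h1'.trans h2') (lt_irrefl n)
  · exact absurd (he ▸ h1') (lt_irrefl n)
  · exact absurd h2' (lt_irrefl n)
  · exact h.2 h1' h2'

theorem covBy_natProd_junction {n : ℕ} {a b : α} (ha : ∀ x, x ≤ a) (hb : ∀ y, b ≤ y) :
    (toLex (n, a) : ℕ ×ₗ α) ⋖ toLex (n + 1, b) := by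
  refine ⟨plt_iff.2 (Or.inl (Nat.lt_succ_self n)), fun c h1 h2 => ?_⟩
  obtain ⟨m, d⟩ := c
  rcases plt_iff.1 h1 with h1' | ⟨rfl, h1'⟩ <;> rcases plt_iff.1 h2 with h2' | ⟨he, h2'⟩
  · omega
  · exact absurd h2' (not_lt.2 (hb d))
  · exact absurd h1' (not_lt.2 (ha d))
  · exact absurd h1' (not_lt.2 (ha d))

theorem covBy_natDualProd_junction {n : ℕ} {a b : α} (ha : ∀ x, x ≤ a) (hb : ∀ y, b ≤ y) :
    (toLex (toDual (n + 1), a) : ℕᵒᵈ ×ₗ α) ⋖ toLex (toDual n, b) := by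
  refine ⟨plt_iff.2 (Or.inl (dual_lt.2 (Nat.lt_succ_self n))), fun c h1 h2 => ?_⟩
  obtain ⟨m, d⟩ := c
  rcases plt_iff.1 h1 with h1' | ⟨he, h1'⟩ <;> rcases plt_iff.1 h2 with h2' | ⟨he2, h2'⟩
  · rw [dual_lt] at h1' h2'; simp only [OrderDual.ofDual_toDual] at h1' h2'; omega
  · exact absurd h2' (not_lt.2 (hb d))
  · exact absurd h1' (not_lt.2 (ha d))
  · exact absurd h1' (not_lt.2 (ha d))

theorem disc_natProd (h : IsDiscreteLO α) (h0 : HMin α) (h1 : HMax α) :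
    IsDiscreteLO (ℕ ×ₗ α) := by
  obtain ⟨mn, hmn⟩ := h0
  obtain ⟨mx, hmx⟩ := h1
  constructor
  · rintro x ⟨y, hy⟩
    obtain ⟨n, a⟩ := x
    by_cases hc : ∃ c, a < c
    · obtain ⟨c, hc⟩ := h.1 a hc
      exact ⟨toLex (n, c), covBy_block hc⟩
    · have hamax : ∀ x : α, x ≤ a := fun x => not_lt.1 fun hx => hc ⟨x, hx⟩
      exact ⟨toLex (n + 1, mn), covBy_natProd_junction hamax hmn⟩
  · rintro x ⟨y, hy⟩
    obtain ⟨n, a⟩ := x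
    by_cases hc : ∃ c, c < a
    · obtain ⟨c, hc⟩ := h.2 a hc
      exact ⟨toLex (n, c), covBy_block hc⟩
    · have hamin : ∀ x : α, a ≤ x := fun x => not_lt.1 fun hx => hc ⟨x, hx⟩
      obtain ⟨m, d⟩ := y
      have : m < n ∨ (m = n ∧ d < a) := plt_iff.1 hy
      have hn : 0 < n := by
        rcases this with h' | ⟨rfl, h'⟩
        · omega
        · exact absurd h' (not_lt.2 (hamin d))
      obtain ⟨k, rfl⟩ : ∃ k, n = k + 1 := ⟨n - 1, by omega⟩
      exact ⟨toLex (k, mx), covBy_natProd_junction hmx hamin⟩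

theorem disc_natDualProd (h : IsDiscreteLO α) (h0 : HMin α) (h1 : HMax α) :
    IsDiscreteLO (ℕᵒᵈ ×ₗ α) := by
  obtain ⟨mn, hmn⟩ := h0
  obtain ⟨mx, hmx⟩ := h1
  constructor
  · rintro x ⟨y, hy⟩
    obtain ⟨n, a⟩ := x
    by_cases hc : ∃ c, a < c
    · obtain ⟨c, hc⟩ := h.1 a hc
      exact ⟨toLex (n, c), covBy_block hc⟩
    · have hamax : ∀ x : α, x ≤ a := fun x => not_lt.1 fun hx => hc ⟨x, hx⟩
      obtain ⟨m, d⟩ := y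
      have hlt : n < m ∨ (n = m ∧ a < d) := plt_iff.1 hy
      have hn : 0 < ofDual n := by
        rcases hlt with h' | ⟨he, h'⟩
        · rw [dual_lt] at h'; omega
        · exact absurd h' (not_lt.2 (hamax d))
      obtain ⟨k, hk⟩ : ∃ k, ofDual n = k + 1 := ⟨ofDual n - 1, by omega⟩
      have hn' : n = toDual (k + 1) := dual_eq.2 hk
      refine ⟨toLex (toDual k, mn), ?_⟩
      rw [show (n, a) = ((toDual (k+1) : ℕᵒᵈ), a) by rw [hn']]
      exact covBy_natDualProd_junction hamax hmn
  · rintro x ⟨y, hy⟩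
    obtain ⟨n, a⟩ := x
    by_cases hc : ∃ c, c < a
    · obtain ⟨c, hc⟩ := h.2 a hc
      exact ⟨toLex (n, c), covBy_block hc⟩
    · have hamin : ∀ x : α, a ≤ x := fun x => not_lt.1 fun hx => hc ⟨x, hx⟩
      exact ⟨toLex (toDual (ofDual n + 1), mx), covBy_natDualProd_junction hmx hamin⟩

theorem disc_prod_factor [Nonempty ι] (h : IsDiscreteLO (ι ×ₗ α)) : IsDiscreteLO α := by
  have i : ι := Classical.arbitrary ι
  constructor
  · rintro a ⟨b, hb⟩
    obtain ⟨y, hy⟩ := h.1 (toLex (i, a)) ⟨toLex (i, b), plt_iff.2 (Or.inr ⟨rfl, hb⟩)⟩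
    have hyb : y ≤ toLex (i, b) := by
      by_contra hlt
      exact hy.2 (plt_iff.2 (Or.inr ⟨rfl, hb⟩)) (not_le.1 hlt)
    obtain ⟨j, c⟩ := y
    have h1 := plt_iff.1 hy.1
    have h2 := ple_iff.1 hyb
    have hji : j = i := by
      rcases h1 with h' | ⟨h', _⟩ <;> rcases h2 with h'' | ⟨h'', _⟩ <;>
        first
          | exact absurd (h'.trans h'') (lt_irrefl _)
          | exact h''
          | exact h'.symm
          | exact absurd (h''.symm ▸ h' : i < i) (lt_irrefl _)
    subst hji
    have hac : a < c := by
      rcases h1 with h' | ⟨_, h'⟩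
      · exact absurd h' (lt_irrefl _)
      · exact h'
    refine ⟨c, hac, fun d hd1 hd2 => ?_⟩
    exact hy.2 (plt_iff.2 (Or.inr ⟨rfl, hd1⟩)) (plt_iff.2 (Or.inr ⟨rfl, hd2⟩))
  · rintro a ⟨b, hb⟩
    obtain ⟨y, hy⟩ := h.2 (toLex (i, a)) ⟨toLex (i, b), plt_iff.2 (Or.inr ⟨rfl, hb⟩)⟩
    have hyb : toLex (i, b) ≤ y := by
      by_contra hlt
      exact hy.2 (not_le.1 hlt) (plt_iff.2 (Or.inr ⟨rfl, hb⟩))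
    obtain ⟨j, c⟩ := y
    have h1 := plt_iff.1 hy.1
    have h2 := ple_iff.1 hyb
    have hji : j = i := by
      rcases h1 with h' | ⟨h', _⟩ <;> rcases h2 with h'' | ⟨h'', _⟩ <;>
        first
          | exact absurd (h''.trans h') (lt_irrefl _)
          | exact h''.symm
          | exact h'
          | exact absurd (h''.symm ▸ h' : i < i) (lt_irrefl _)
    subst hji
    have hac : c < a := by
      rcases h1 with h' | ⟨_, h'⟩
      · exact absurd h' (lt_irrefl _)
      · exact h'
    refine ⟨c, hac, fun d hd1 hd2 => ?_⟩
    exact hy.2 (plt_iff.2 (Or.inr ⟨rfl, hd1⟩)) (plt_iff.2 (Or.inr ⟨rfl, hd2⟩))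


theorem natProd_min_to_max (h : IsDiscreteLO (ℕ ×ₗ α)) (hmin : HMin α) : HMax α := by
  obtain ⟨mn, hmn⟩ := hmin
  obtain ⟨y, hy⟩ := h.2 (toLex (1, mn)) ⟨toLex (0, mn), plt_iff.2 (Or.inl one_pos)⟩
  obtain ⟨m, c⟩ := y
  have hm : m = 0 := by
    rcases plt_iff.1 hy.1 with h' | ⟨h', h''⟩
    · omega
    · exact absurd h'' (not_lt.2 (hmn c))
  subst hm
  refine ⟨c, fun d => ?_⟩
  by_contra hcd
  exact hy.2 (plt_iff.2 (Or.inr ⟨rfl, not_le.1 hcd⟩)) (plt_iff.2 (Or.inl one_pos))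

theorem natProd_max_to_min (h : IsDiscreteLO (ℕ ×ₗ α)) (hmax : HMax α) : HMin α := by
  obtain ⟨mx, hmx⟩ := hmax
  obtain ⟨y, hy⟩ := h.1 (toLex (0, mx)) ⟨toLex (1, mx), plt_iff.2 (Or.inl one_pos)⟩
  obtain ⟨m, c⟩ := y
  have hm1 : 1 ≤ m := by
    rcases plt_iff.1 hy.1 with h' | ⟨h', h''⟩
    · omega
    · exact absurd h'' (not_lt.2 (hmx c))
  have hm : m = 1 := by
    by_contra hne
    exact hy.2 (show toLex (0, mx) < toLex (1, c) from plt_iff.2 (Or.inl one_pos))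
      (show toLex (1, c) < toLex (m, c) from plt_iff.2 (Or.inl (by omega)))
  subst hm
  refine ⟨c, fun d => ?_⟩
  by_contra hdc
  exact hy.2 (plt_iff.2 (Or.inl one_pos)) (plt_iff.2 (Or.inr ⟨rfl, not_le.1 hdc⟩))

theorem natDualProd_max_to_min (h : IsDiscreteLO (ℕᵒᵈ ×ₗ α)) (hmax : HMax α) : HMin α := by
  obtain ⟨mx, hmx⟩ := hmax
  have h01 : (toDual 1 : ℕᵒᵈ) < toDual 0 := by rw [dual_lt]; simp
  obtain ⟨y, hy⟩ := h.1 (toLex (toDual 1, mx)) ⟨toLex (toDual 0, mx), plt_iff.2 (Or.inl h01)⟩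
  obtain ⟨m, c⟩ := y
  have hm : m = toDual 0 := by
    rcases plt_iff.1 hy.1 with h' | ⟨h', h''⟩
    · rw [dual_lt] at h'
      simp only [OrderDual.ofDual_toDual] at h'
      rw [dual_eq]; simp only [OrderDual.ofDual_toDual]; omega
    · exact absurd h'' (not_lt.2 (hmx c))
  subst hm
  refine ⟨c, fun d => ?_⟩
  by_contra hdc
  exact hy.2 (plt_iff.2 (Or.inl h01)) (plt_iff.2 (Or.inr ⟨rfl, not_le.1 hdc⟩))

theorem natDualProd_min_to_max (h : IsDiscreteLO (ℕᵒᵈ ×ₗ α)) (hmin : HMin α) : HMax α := by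
  obtain ⟨mn, hmn⟩ := hmin
  have h01 : (toDual 1 : ℕᵒᵈ) < toDual 0 := by rw [dual_lt]; simp
  obtain ⟨y, hy⟩ := h.2 (toLex (toDual 0, mn)) ⟨toLex (toDual 1, mn), plt_iff.2 (Or.inl h01)⟩
  obtain ⟨m, c⟩ := y
  have hm1 : 1 ≤ ofDual m := by
    rcases plt_iff.1 hy.1 with h' | ⟨h', h''⟩
    · rw [dual_lt] at h'
      simp only [OrderDual.ofDual_toDual] at h'
      omega
    · exact absurd h'' (not_lt.2 (hmn c))
  have hm : m = toDual 1 := by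
    by_contra hne
    have hlt : m < toDual 1 := by
      rw [dual_lt]
      simp only [OrderDual.ofDual_toDual]
      rcases lt_or_ge 1 (ofDual m) with h' | h'
      · exact h'
      · exact absurd (dual_eq.2 (show ofDual m = ofDual (toDual 1) by
          simp only [OrderDual.ofDual_toDual]; omega)) hne
    exact hy.2 (show (toLex (m, c) : ℕᵒᵈ ×ₗ α) < toLex (toDual 1, c) from plt_iff.2 (Or.inl hlt))
      (show (toLex (toDual 1, c) : ℕᵒᵈ ×ₗ α) < toLex (toDual 0, mn) from plt_iff.2 (Or.inl h01))
  subst hm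
  refine ⟨c, fun d => ?_⟩
  by_contra hcd
  exact hy.2 (plt_iff.2 (Or.inr ⟨rfl, not_le.1 hcd⟩)) (plt_iff.2 (Or.inl h01))





theorem plt_iff' {ι : Type} [LinearOrder ι] {n m : ι} {a b : α} :
    (toLex (n, a) : ι ×ₗ α) < toLex (m, b) ↔ n < m ∨ (n = m ∧ a < b) := Prod.Lex.lt_iff

theorem dual_le' {n m : ℕᵒᵈ} : n ≤ m ↔ OrderDual.ofDual m ≤ OrderDual.ofDual n := Iff.rfl
theorem dual_lt' {n m : ℕᵒᵈ} : n < m ↔ OrderDual.ofDual m < OrderDual.ofDual n := Iff.rfl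
theorem dual_eq' {n m : ℕᵒᵈ} : n = m ↔ OrderDual.ofDual n = OrderDual.ofDual m := Iff.rfl

theorem ple_iff' {ι : Type} [LinearOrder ι] {n m : ι} {a b : α} :
    (toLex (n, a) : ι ×ₗ α) ≤ toLex (m, b) ↔ n < m ∨ (n = m ∧ a ≤ b) := Prod.Lex.le_iff

/-- absorb an empty left summand -/
def sumEmptyL (he : IsEmpty α) : (α ⊕ₗ β) ≃o β where
  toFun x := match x with
    | Sum.inl a => he.elim a
    | Sum.inr b => b
  invFun b := toLex (Sum.inr b)
  left_inv x := by rcases x with a | b; exact he.elim a; rfl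
  right_inv b := rfl
  map_rel_iff' {x y} := by
    rcases x with a | b
    · exact he.elim a
    · rcases y with a | c
      · exact he.elim a
      · show b ≤ c ↔ (toLex (Sum.inr b) : α ⊕ₗ β) ≤ toLex (Sum.inr c)
        exact Sum.Lex.inr_le_inr_iff.symm

/-- absorb an empty right summand -/
def sumEmptyR (he : IsEmpty β) : (α ⊕ₗ β) ≃o α where
  toFun x := match x with
    | Sum.inl a => a
    | Sum.inr b => he.elim b
  invFun a := toLex (Sum.inl a)
  left_inv x := by rcases x with a | b; rfl; exact he.elim b
  right_inv a := rfl
  map_rel_iff' {x y} := by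
    rcases x with a | b
    · rcases y with c | b
      · show a ≤ c ↔ (toLex (Sum.inl a) : α ⊕ₗ β) ≤ toLex (Sum.inl c)
        exact Sum.Lex.inl_le_inl_iff.symm
      · exact he.elim b
    · exact he.elim b

/-- congruence of lexicographic sums -/
def sumCongr (e1 : α ≃o γ) (e2 : β ≃o δ) : (α ⊕ₗ β) ≃o (γ ⊕ₗ δ) where
  toFun x := match x with
    | Sum.inl a => toLex (Sum.inl (e1 a))
    | Sum.inr b => toLex (Sum.inr (e2 b))
  invFun y := match y with
    | Sum.inl c => toLex (Sum.inl (e1.symm c))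
    | Sum.inr d => toLex (Sum.inr (e2.symm d))
  left_inv x := by
    rcases x with a | b
    · show toLex (Sum.inl (e1.symm (e1 a))) = _; simp; rfl
    · show toLex (Sum.inr (e2.symm (e2 b))) = _; simp; rfl
  right_inv y := by
    rcases y with c | d
    · show toLex (Sum.inl (e1 (e1.symm c))) = _; simp; rfl
    · show toLex (Sum.inr (e2 (e2.symm d))) = _; simp; rfl
  map_rel_iff' {x y} := by
    rcases x with a | b <;> rcases y with c | d
    · show (toLex (Sum.inl (e1 a)) : γ ⊕ₗ δ) ≤ toLex (Sum.inl (e1 c)) ↔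
        (toLex (Sum.inl a) : α ⊕ₗ β) ≤ toLex (Sum.inl c)
      rw [Sum.Lex.inl_le_inl_iff, Sum.Lex.inl_le_inl_iff]
      exact e1.le_iff_le
    · show (toLex (Sum.inl (e1 a)) : γ ⊕ₗ δ) ≤ toLex (Sum.inr (e2 d)) ↔
        (toLex (Sum.inl a) : α ⊕ₗ β) ≤ toLex (Sum.inr d)
      simp [Sum.Lex.inl_le_inr]
    · show (toLex (Sum.inr (e2 b)) : γ ⊕ₗ δ) ≤ toLex (Sum.inl (e1 c)) ↔
        (toLex (Sum.inr b) : α ⊕ₗ β) ≤ toLex (Sum.inl c)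
      constructor
      · intro h; exact absurd h Sum.Lex.not_inr_le_inl
      · intro h; exact absurd h Sum.Lex.not_inr_le_inl
    · show (toLex (Sum.inr (e2 b)) : γ ⊕ₗ δ) ≤ toLex (Sum.inr (e2 d)) ↔
        (toLex (Sum.inr b) : α ⊕ₗ β) ≤ toLex (Sum.inr d)
      rw [Sum.Lex.inr_le_inr_iff, Sum.Lex.inr_le_inr_iff]
      exact e2.le_iff_le

/-- congruence of lexicographic products in the second factor -/
def prodCongr {ι : Type} [LinearOrder ι] (e : α ≃o β) : (ι ×ₗ α) ≃o (ι ×ₗ β) where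
  toFun x := toLex ((ofLex x).1, e (ofLex x).2)
  invFun y := toLex ((ofLex y).1, e.symm (ofLex y).2)
  left_inv x := by
    obtain ⟨n, a⟩ := x
    show toLex (n, e.symm (e a)) = _
    simp; rfl
  right_inv y := by
    obtain ⟨n, b⟩ := y
    show toLex (n, e (e.symm b)) = _
    simp; rfl
  map_rel_iff' {x y} := by
    obtain ⟨n, a⟩ := x
    obtain ⟨m, b⟩ := y
    show (toLex (n, e a) : ι ×ₗ β) ≤ toLex (m, e b) ↔ (toLex (n, a) : ι ×ₗ α) ≤ toLex (m, b)
    rw [ple_iff', ple_iff']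
    exact or_congr Iff.rfl (and_congr Iff.rfl e.le_iff_le)


/-- `(P + Q)·ω ≅ P + (Q + P)·ω` -/
def rho : (ℕ ×ₗ (α ⊕ₗ β)) ≃o (α ⊕ₗ (ℕ ×ₗ (β ⊕ₗ α))) where
  toFun x :=
    match ofLex (ofLex x).2 with
    | Sum.inr b => toLex (Sum.inr (toLex ((ofLex x).1, toLex (Sum.inl b))))
    | Sum.inl a =>
      match (ofLex x).1 with
      | 0 => toLex (Sum.inl a)
      | Nat.succ n => toLex (Sum.inr (toLex (n, toLex (Sum.inr a))))
  invFun y :=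
    match y with
    | Sum.inl a => toLex (0, toLex (Sum.inl a))
    | Sum.inr p =>
      match ofLex (ofLex p).2 with
      | Sum.inl b => toLex ((ofLex p).1, toLex (Sum.inr b))
      | Sum.inr a => toLex ((ofLex p).1 + 1, toLex (Sum.inl a))
  left_inv x := by
    obtain ⟨n, u⟩ := x
    rcases u with a | b
    · rcases n with _ | n <;> rfl
    · rfl
  right_inv y := by
    rcases y with a | p
    · rfl
    · obtain ⟨n, u⟩ := p
      rcases u with b | a <;> rfl
  map_rel_iff' {x y} := by
    obtain ⟨n, u⟩ := x
    obtain ⟨m, v⟩ := y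
    rcases u with a | b <;> rcases v with c | d
    · rcases n with _ | n <;> rcases m with _ | m
      · show (toLex (Sum.inl a) : α ⊕ₗ (ℕ ×ₗ (β ⊕ₗ α))) ≤ toLex (Sum.inl c) ↔
          (toLex ((0:ℕ), toLex (Sum.inl a)) : ℕ ×ₗ (α ⊕ₗ β)) ≤ toLex (0, toLex (Sum.inl c))
        rw [Sum.Lex.inl_le_inl_iff, ple_iff']
        simp [Sum.Lex.inl_le_inl_iff]
      · show (toLex (Sum.inl a) : α ⊕ₗ (ℕ ×ₗ (β ⊕ₗ α))) ≤
            toLex (Sum.inr (toLex (m, toLex (Sum.inr c)))) ↔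
          (toLex ((0:ℕ), toLex (Sum.inl a)) : ℕ ×ₗ (α ⊕ₗ β)) ≤ toLex (m + 1, toLex (Sum.inl c))
        rw [ple_iff']
        simp [Sum.Lex.inl_le_inr]
      · show (toLex (Sum.inr (toLex (n, toLex (Sum.inr a)))) : α ⊕ₗ (ℕ ×ₗ (β ⊕ₗ α))) ≤
            toLex (Sum.inl c) ↔
          (toLex (n + 1, toLex (Sum.inl a)) : ℕ ×ₗ (α ⊕ₗ β)) ≤ toLex (0, toLex (Sum.inl c))
        rw [ple_iff']
        simp only [iff_false_intro Sum.Lex.not_inr_le_inl, false_iff]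
        push_neg
        exact ⟨Nat.zero_le _, fun h => absurd h (Nat.succ_ne_zero n)⟩
      · show (toLex (Sum.inr (toLex (n, toLex (Sum.inr a)))) : α ⊕ₗ (ℕ ×ₗ (β ⊕ₗ α))) ≤
            toLex (Sum.inr (toLex (m, toLex (Sum.inr c)))) ↔
          (toLex (n + 1, toLex (Sum.inl a)) : ℕ ×ₗ (α ⊕ₗ β)) ≤ toLex (m + 1, toLex (Sum.inl c))
        rw [Sum.Lex.inr_le_inr_iff, ple_iff', ple_iff']
        rw [Sum.Lex.inr_le_inr_iff, Sum.Lex.inl_le_inl_iff]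
        constructor
        · rintro (h | ⟨rfl, h⟩)
          · exact Or.inl (by omega)
          · exact Or.inr ⟨rfl, h⟩
        · rintro (h | ⟨he, h⟩)
          · exact Or.inl (by omega)
          · exact Or.inr ⟨by omega, h⟩
    · rcases n with _ | n
      · show (toLex (Sum.inl a) : α ⊕ₗ (ℕ ×ₗ (β ⊕ₗ α))) ≤
            toLex (Sum.inr (toLex (m, toLex (Sum.inl d)))) ↔
          (toLex ((0:ℕ), toLex (Sum.inl a)) : ℕ ×ₗ (α ⊕ₗ β)) ≤ toLex (m, toLex (Sum.inr d))
        rw [ple_iff']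
        simp only [iff_true_intro (Sum.Lex.inl_le_inr _ _), true_iff]
        rcases Nat.eq_zero_or_pos m with rfl | hm
        · exact Or.inr ⟨rfl, trivial⟩
        · exact Or.inl hm
      · show (toLex (Sum.inr (toLex (n, toLex (Sum.inr a)))) : α ⊕ₗ (ℕ ×ₗ (β ⊕ₗ α))) ≤
            toLex (Sum.inr (toLex (m, toLex (Sum.inl d)))) ↔
          (toLex (n + 1, toLex (Sum.inl a)) : ℕ ×ₗ (α ⊕ₗ β)) ≤ toLex (m, toLex (Sum.inr d))
        rw [Sum.Lex.inr_le_inr_iff, ple_iff', ple_iff']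
        constructor
        · rintro (h | ⟨rfl, h⟩)
          · rcases Nat.lt_or_ge (n+1) m with h' | h'
            · exact Or.inl h'
            · have : m = n + 1 := by omega
              subst this
              exact Or.inr ⟨rfl, le_of_lt (Sum.Lex.inl_lt_inr a d)⟩
          · exact absurd h Sum.Lex.not_inr_le_inl
        · rintro (h | ⟨he, h⟩)
          · exact Or.inl (by omega)
          · exact Or.inl (by omega)
    · rcases m with _ | m
      · show (toLex (Sum.inr (toLex (n, toLex (Sum.inl b)))) : α ⊕ₗ (ℕ ×ₗ (β ⊕ₗ α))) ≤
            toLex (Sum.inl c) ↔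
          (toLex (n, toLex (Sum.inr b)) : ℕ ×ₗ (α ⊕ₗ β)) ≤ toLex ((0:ℕ), toLex (Sum.inl c))
        rw [ple_iff']
        simp only [iff_false_intro Sum.Lex.not_inr_le_inl, false_iff]
        push_neg
        exact ⟨Nat.zero_le _, fun _ => trivial⟩
      · show (toLex (Sum.inr (toLex (n, toLex (Sum.inl b)))) : α ⊕ₗ (ℕ ×ₗ (β ⊕ₗ α))) ≤
            toLex (Sum.inr (toLex (m, toLex (Sum.inr c)))) ↔
          (toLex (n, toLex (Sum.inr b)) : ℕ ×ₗ (α ⊕ₗ β)) ≤ toLex (m + 1, toLex (Sum.inl c))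
        rw [Sum.Lex.inr_le_inr_iff, ple_iff', ple_iff']
        constructor
        · rintro (h | ⟨rfl, h⟩)
          · exact Or.inl (by omega)
          · exact Or.inl (by omega)
        · rintro (h | ⟨he, h⟩)
          · rcases Nat.lt_or_ge n m with h' | h'
            · exact Or.inl h'
            · have : n = m := by omega
              subst this
              exact Or.inr ⟨rfl, le_of_lt (Sum.Lex.inl_lt_inr b c)⟩
          · exact absurd h Sum.Lex.not_inr_le_inl
    · show (toLex (Sum.inr (toLex (n, toLex (Sum.inl b)))) : α ⊕ₗ (ℕ ×ₗ (β ⊕ₗ α))) ≤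
          toLex (Sum.inr (toLex (m, toLex (Sum.inl d)))) ↔
        (toLex (n, toLex (Sum.inr b)) : ℕ ×ₗ (α ⊕ₗ β)) ≤ toLex (m, toLex (Sum.inr d))
      rw [Sum.Lex.inr_le_inr_iff, ple_iff', ple_iff']
      rw [Sum.Lex.inl_le_inl_iff, Sum.Lex.inr_le_inr_iff]



/-- `(P + Q)·ω* ≅ (Q + P)·ω* + Q` -/
def rhoStar : (ℕᵒᵈ ×ₗ (α ⊕ₗ β)) ≃o ((ℕᵒᵈ ×ₗ (β ⊕ₗ α)) ⊕ₗ β) where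
  toFun x :=
    match ofLex (ofLex x).2 with
    | Sum.inl a => toLex (Sum.inl (toLex ((ofLex x).1, toLex (Sum.inr a))))
    | Sum.inr b =>
      match ofDual (ofLex x).1 with
      | 0 => toLex (Sum.inr b)
      | Nat.succ k => toLex (Sum.inl (toLex (toDual k, toLex (Sum.inl b))))
  invFun y :=
    match y with
    | Sum.inr b => toLex (toDual 0, toLex (Sum.inr b))
    | Sum.inl p =>
      match ofLex (ofLex p).2 with
      | Sum.inr a => toLex ((ofLex p).1, toLex (Sum.inl a))
      | Sum.inl b => toLex (toDual (ofDual (ofLex p).1 + 1), toLex (Sum.inr b))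
  left_inv x := by
    obtain ⟨n, u⟩ := x
    rcases u with a | b
    · rfl
    · rcases n with _ | k <;> rfl
  right_inv y := by
    rcases y with p | b
    · obtain ⟨n, u⟩ := p
      rcases u with b | a
      · rfl
      · rfl
    · rfl
  map_rel_iff' {x y} := by
    obtain ⟨n, u⟩ := x
    obtain ⟨m, v⟩ := y
    rcases u with a | b <;> rcases v with c | d
    · show (toLex (Sum.inl (toLex (n, toLex (Sum.inr a)))) : (ℕᵒᵈ ×ₗ (β ⊕ₗ α)) ⊕ₗ β) ≤
          toLex (Sum.inl (toLex (m, toLex (Sum.inr c)))) ↔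
        (toLex (n, toLex (Sum.inl a)) : ℕᵒᵈ ×ₗ (α ⊕ₗ β)) ≤ toLex (m, toLex (Sum.inl c))
      rw [Sum.Lex.inl_le_inl_iff, ple_iff', ple_iff', Sum.Lex.inr_le_inr_iff,
        Sum.Lex.inl_le_inl_iff]
    · rcases m with _ | l
      · show (toLex (Sum.inl (toLex (n, toLex (Sum.inr a)))) : (ℕᵒᵈ ×ₗ (β ⊕ₗ α)) ⊕ₗ β) ≤
            toLex (Sum.inr d) ↔
          (toLex (n, toLex (Sum.inl a)) : ℕᵒᵈ ×ₗ (α ⊕ₗ β)) ≤ toLex (toDual 0, toLex (Sum.inr d))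
        rw [ple_iff']
        simp only [iff_true_intro (Sum.Lex.inl_le_inr _ _), true_iff]
        rcases Nat.eq_zero_or_pos (ofDual n) with h0 | hpos
        · exact Or.inr ⟨dual_eq'.2 (by simpa using h0), trivial⟩
        · exact Or.inl (dual_lt'.2 (by simpa using hpos))
      · show (toLex (Sum.inl (toLex (n, toLex (Sum.inr a)))) : (ℕᵒᵈ ×ₗ (β ⊕ₗ α)) ⊕ₗ β) ≤
            toLex (Sum.inl (toLex (toDual l, toLex (Sum.inl d)))) ↔
          (toLex (n, toLex (Sum.inl a)) : ℕᵒᵈ ×ₗ (α ⊕ₗ β)) ≤ toLex (toDual (l+1), toLex (Sum.inr d))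
        rw [Sum.Lex.inl_le_inl_iff, ple_iff', ple_iff']
        constructor
        · rintro (h | ⟨rfl, h⟩)
          · rw [dual_lt'] at h
            simp only [OrderDual.ofDual_toDual] at h
            rcases Nat.lt_or_ge (l+1) (ofDual n) with h' | h'
            · exact Or.inl (dual_lt'.2 (by simpa using h'))
            · exact Or.inr ⟨dual_eq'.2 (by simp only [OrderDual.ofDual_toDual]; omega),
                le_of_lt (Sum.Lex.inl_lt_inr a d)⟩
          · exact absurd h Sum.Lex.not_inr_le_inl
        · rintro (h | ⟨rfl, h⟩)
          · rw [dual_lt'] at h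
            simp only [OrderDual.ofDual_toDual] at h
            exact Or.inl (dual_lt'.2 (by simp only [OrderDual.ofDual_toDual]; omega))
          · exact Or.inl (dual_lt'.2 (by simp only [OrderDual.ofDual_toDual]; omega))
    · rcases n with _ | k
      · show (toLex (Sum.inr b) : (ℕᵒᵈ ×ₗ (β ⊕ₗ α)) ⊕ₗ β) ≤
            toLex (Sum.inl (toLex (m, toLex (Sum.inr c)))) ↔
          (toLex (toDual 0, toLex (Sum.inr b)) : ℕᵒᵈ ×ₗ (α ⊕ₗ β)) ≤ toLex (m, toLex (Sum.inl c))
        rw [ple_iff']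
        simp only [iff_false_intro Sum.Lex.not_inr_le_inl, false_iff]
        push_neg
        refine ⟨?_, fun _ => trivial⟩
        rw [dual_le']
        simp only [OrderDual.ofDual_toDual]
        omega
      · show (toLex (Sum.inl (toLex (toDual k, toLex (Sum.inl b)))) : (ℕᵒᵈ ×ₗ (β ⊕ₗ α)) ⊕ₗ β) ≤
            toLex (Sum.inl (toLex (m, toLex (Sum.inr c)))) ↔
          (toLex (toDual (k+1), toLex (Sum.inr b)) : ℕᵒᵈ ×ₗ (α ⊕ₗ β)) ≤ toLex (m, toLex (Sum.inl c))
        rw [Sum.Lex.inl_le_inl_iff, ple_iff', ple_iff']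
        constructor
        · rintro (h | ⟨rfl, h⟩)
          · refine Or.inl (dual_lt'.2 ?_)
            have := dual_lt'.1 h
            simp only [OrderDual.ofDual_toDual] at this ⊢
            omega
          · exact Or.inl (dual_lt'.2 (by simp only [OrderDual.ofDual_toDual]; omega))
        · rintro (h | ⟨he, h⟩)
          · have h' := dual_lt'.1 h
            simp only [OrderDual.ofDual_toDual] at h'
            rcases Nat.lt_or_ge (ofDual m) k with h'' | h''
            · exact Or.inl (dual_lt'.2 (by simp only [OrderDual.ofDual_toDual]; omega))
            · exact Or.inr ⟨dual_eq'.2 (by simp only [OrderDual.ofDual_toDual]; omega),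
                le_of_lt (Sum.Lex.inl_lt_inr b c)⟩
          · exact absurd h Sum.Lex.not_inr_le_inl
    · rcases n with _ | k <;> rcases m with _ | l
      · show (toLex (Sum.inr b) : (ℕᵒᵈ ×ₗ (β ⊕ₗ α)) ⊕ₗ β) ≤ toLex (Sum.inr d) ↔
          (toLex (toDual 0, toLex (Sum.inr b)) : ℕᵒᵈ ×ₗ (α ⊕ₗ β)) ≤ toLex (toDual 0, toLex (Sum.inr d))
        rw [Sum.Lex.inr_le_inr_iff, ple_iff', Sum.Lex.inr_le_inr_iff]
        constructor
        · intro h; exact Or.inr ⟨rfl, h⟩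
        · rintro (h | ⟨_, h⟩)
          · have := dual_lt'.1 h
            simp only [OrderDual.ofDual_toDual] at this
            omega
          · exact h
      · show (toLex (Sum.inr b) : (ℕᵒᵈ ×ₗ (β ⊕ₗ α)) ⊕ₗ β) ≤
            toLex (Sum.inl (toLex (toDual l, toLex (Sum.inl d)))) ↔
          (toLex (toDual 0, toLex (Sum.inr b)) : ℕᵒᵈ ×ₗ (α ⊕ₗ β)) ≤ toLex (toDual (l+1), toLex (Sum.inr d))
        rw [ple_iff']
        simp only [iff_false_intro Sum.Lex.not_inr_le_inl, false_iff]
        push_neg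
        refine ⟨?_, fun he => ?_⟩
        · rw [dual_le']
          simp only [OrderDual.ofDual_toDual]
          omega
        · exfalso
          rw [dual_eq'] at he
          simp only [OrderDual.ofDual_toDual] at he
          omega
      · show (toLex (Sum.inl (toLex (toDual k, toLex (Sum.inl b)))) : (ℕᵒᵈ ×ₗ (β ⊕ₗ α)) ⊕ₗ β) ≤
            toLex (Sum.inr d) ↔
          (toLex (toDual (k+1), toLex (Sum.inr b)) : ℕᵒᵈ ×ₗ (α ⊕ₗ β)) ≤ toLex (toDual 0, toLex (Sum.inr d))
        rw [ple_iff']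
        simp only [iff_true_intro (Sum.Lex.inl_le_inr _ _), true_iff]
        exact Or.inl (dual_lt'.2 (by simp only [OrderDual.ofDual_toDual]; omega))
      · show (toLex (Sum.inl (toLex (toDual k, toLex (Sum.inl b)))) : (ℕᵒᵈ ×ₗ (β ⊕ₗ α)) ⊕ₗ β) ≤
            toLex (Sum.inl (toLex (toDual l, toLex (Sum.inl d)))) ↔
          (toLex (toDual (k+1), toLex (Sum.inr b)) : ℕᵒᵈ ×ₗ (α ⊕ₗ β)) ≤ toLex (toDual (l+1), toLex (Sum.inr d))
        rw [Sum.Lex.inl_le_inl_iff, ple_iff', ple_iff', Sum.Lex.inl_le_inl_iff,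
          Sum.Lex.inr_le_inr_iff]
        constructor
        · rintro (h | ⟨he, h⟩)
          · refine Or.inl (dual_lt'.2 ?_)
            have := dual_lt'.1 h
            simp only [OrderDual.ofDual_toDual] at this ⊢
            omega
          · refine Or.inr ⟨dual_eq'.2 ?_, h⟩
            rw [dual_eq'] at he
            simp only [OrderDual.ofDual_toDual] at he ⊢
            omega
        · rintro (h | ⟨he, h⟩)
          · refine Or.inl (dual_lt'.2 ?_)
            have := dual_lt'.1 h
            simp only [OrderDual.ofDual_toDual] at this ⊢
            omega
          · refine Or.inr ⟨dual_eq'.2 ?_, h⟩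
            rw [dual_eq'] at he
            simp only [OrderDual.ofDual_toDual] at he ⊢
            omega


/-! ### additional transfer helpers -/

theorem nomax_iso (e : α ≃o β) (h : ∀ a : α, ∃ b, a < b) : ∀ a : β, ∃ b, a < b := by
  intro a
  obtain ⟨b, hb⟩ := h (e.symm a)
  exact ⟨e b, by simpa using e.lt_iff_lt.2 hb⟩

theorem nomin_iso (e : α ≃o β) (h : ∀ a : α, ∃ b, b < a) : ∀ a : β, ∃ b, b < a := by
  intro a
  obtain ⟨b, hb⟩ := h (e.symm a)
  exact ⟨e b, by simpa using e.lt_iff_lt.2 hb⟩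

theorem not_hmax (h : ∀ a : α, ∃ b, a < b) : ¬HMax α := by
  rintro ⟨m, hm⟩
  obtain ⟨b, hb⟩ := h m
  exact absurd hb (not_lt.2 (hm b))

theorem not_hmin (h : ∀ a : α, ∃ b, b < a) : ¬HMin α := by
  rintro ⟨m, hm⟩
  obtain ⟨b, hb⟩ := h m
  exact absurd hb (not_lt.2 (hm b))

theorem nomax_of_not_hmax (h : ¬HMax α) : ∀ a : α, ∃ b, a < b := by
  intro a
  by_contra hc
  push_neg at hc
  exact h ⟨a, hc⟩

theorem nomin_of_not_hmin (h : ¬HMin α) : ∀ a : α, ∃ b, b < a := by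
  intro a
  by_contra hc
  push_neg at hc
  exact h ⟨a, hc⟩

theorem nomin_sum_left (hne : Nonempty α) (h : ∀ x : α ⊕ₗ β, ∃ y, y < x) :
    ∀ a : α, ∃ b, b < a := by
  intro a
  obtain ⟨y, hy⟩ := h (toLex (Sum.inl a))
  rcases y with c | c
  · exact ⟨c, Sum.Lex.inl_lt_inl_iff.1 hy⟩
  · exact absurd hy Sum.Lex.not_inr_lt_inl

theorem nomax_sum_right (h : ∀ x : α ⊕ₗ β, ∃ y, x < y) : ∀ b : β, ∃ b', b < b' := by
  intro b
  obtain ⟨y, hy⟩ := h (toLex (Sum.inr b))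
  rcases y with c | c
  · exact absurd hy Sum.Lex.not_inr_lt_inl
  · exact ⟨c, Sum.Lex.inr_lt_inr_iff.1 hy⟩

theorem disc_of_empty (he : IsEmpty α) : IsDiscreteLO α :=
  ⟨fun a => he.elim a, fun a => he.elim a⟩

theorem isEmpty_sumLex (ha : IsEmpty α) (hb : IsEmpty β) : IsEmpty (α ⊕ₗ β) := by
  constructor
  intro x
  rcases x with a | b
  · exact ha.elim a
  · exact hb.elim b

/-! ### iso combinators -/

def congrL (e : β ≃o γ) : (α ⊕ₗ β) ≃o (α ⊕ₗ γ) := sumCongr (OrderIso.refl α) e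

def congrR (e : α ≃o γ) : (α ⊕ₗ β) ≃o (γ ⊕ₗ β) := sumCongr e (OrderIso.refl β)

def asc (α β γ : Type) [LinearOrder α] [LinearOrder β] [LinearOrder γ] :
    ((α ⊕ₗ β) ⊕ₗ γ) ≃o (α ⊕ₗ (β ⊕ₗ γ)) := OrderIso.sumLexAssoc α β γ

/-- `(a+b)+(c+(d+e)) ≅ (a+(b+(c+d)))+e` -/
def reb5 {ε : Type} [LinearOrder ε] :
    ((α ⊕ₗ β) ⊕ₗ (γ ⊕ₗ (δ ⊕ₗ ε))) ≃o ((α ⊕ₗ (β ⊕ₗ (γ ⊕ₗ δ))) ⊕ₗ ε) :=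
  (asc α β (γ ⊕ₗ (δ ⊕ₗ ε))).trans
    (((asc α (β ⊕ₗ (γ ⊕ₗ δ)) ε).trans
      (congrL ((asc β (γ ⊕ₗ δ) ε).trans (congrL (asc γ δ ε))))).symm)

/-! ### D11 : bounded discrete fp linear orders, on the level of types -/

def D11 (α : Type) [LinearOrder α] : Prop := dLOfp11 (BLinOrd.of α)

theorem d11_mk (h1 : LOfp (BLinOrd.of α)) (h2 : IsDiscreteLO α) (h3 : HMin α) (h4 : HMax α) :
    D11 α := ⟨h1, h2, h3, h4⟩

theorem D11.fp (h : D11 α) : LOfp (BLinOrd.of α) := h.1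
theorem D11.disc (h : D11 α) : IsDiscreteLO α := h.2.1
theorem D11.hmin (h : D11 α) : HMin α := h.2.2.1
theorem D11.hmax (h : D11 α) : HMax α := h.2.2.2

theorem d11_iso (h : D11 α) (e : α ≃o β) : D11 β :=
  ⟨LOfp.iso h.fp ⟨e⟩, disc_iso e h.disc, hmin_iso e h.hmin, hmax_iso e h.hmax⟩

theorem d11_sum (ha : D11 α) (hb : D11 β) : D11 (α ⊕ₗ β) :=
  ⟨LOfp.add ha.fp hb.fp,
   disc_sum ha.disc hb.disc (Or.inr (Or.inr (iff_of_true ha.hmax hb.hmin))),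
   hmin_sum_left ha.hmin, hmax_sum_right hb.hmax⟩

theorem d11e_sum (ha : D11 α ∨ IsEmpty α) (hb : D11 β ∨ IsEmpty β) :
    D11 (α ⊕ₗ β) ∨ IsEmpty (α ⊕ₗ β) := by
  rcases ha with ha | ha <;> rcases hb with hb | hb
  · exact Or.inl (d11_sum ha hb)
  · exact Or.inl (d11_iso ha (sumEmptyR hb).symm)
  · exact Or.inl (d11_iso hb (sumEmptyL ha).symm)
  · exact Or.inr (isEmpty_sumLex ha hb)

/-- the central gluing lemma: `X₁ + B·ω + A·ω* + M` is bounded discrete fp. -/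
theorem d11_core (ha : D11 α ∨ IsEmpty α) (hb : D11 β) (hc : D11 γ) (hd : D11 δ ∨ IsEmpty δ) :
    D11 (α ⊕ₗ ((ℕ ×ₗ β) ⊕ₗ ((ℕᵒᵈ ×ₗ γ) ⊕ₗ δ))) := by
  -- the part `ℕ ×ₗ β`
  have discP2 : IsDiscreteLO (ℕ ×ₗ β) := disc_natProd hb.disc hb.hmin hb.hmax
  have minP2 : HMin (ℕ ×ₗ β) := hmin_natProd hb.hmin
  have fpP2 : LOfp (BLinOrd.of (ℕ ×ₗ β)) := LOfp.mulOmega hb.fp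
  have nomaxP2 : ¬HMax (ℕ ×ₗ β) := not_hmax nomax_natProd
  -- the part `ℕᵒᵈ ×ₗ γ`
  have discP3 : IsDiscreteLO (ℕᵒᵈ ×ₗ γ) := disc_natDualProd hc.disc hc.hmin hc.hmax
  have maxP3 : HMax (ℕᵒᵈ ×ₗ γ) := hmax_natDualProd hc.hmax
  have fpP3 : LOfp (BLinOrd.of (ℕᵒᵈ ×ₗ γ)) := LOfp.mulOmegaStar hc.fp
  have nominP3 : ¬HMin (ℕᵒᵈ ×ₗ γ) := not_hmin nomin_natDualProd
  have neP3 : Nonempty (ℕᵒᵈ ×ₗ γ) := by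
    obtain ⟨m, _⟩ := hc.hmin
    exact ⟨toLex (OrderDual.toDual 0, m)⟩
  -- the part `Q := (ℕᵒᵈ ×ₗ γ) ⊕ₗ δ`
  have discδ : IsDiscreteLO δ := by
    rcases hd with hd | hd
    · exact hd.disc
    · exact disc_of_empty hd
  have discQ : IsDiscreteLO ((ℕᵒᵈ ×ₗ γ) ⊕ₗ δ) := by
    refine disc_sum discP3 discδ ?_
    rcases hd with hd | hd
    · exact Or.inr (Or.inr (iff_of_true maxP3 hd.hmin))
    · exact Or.inr (Or.inl hd)
  have maxQ : HMax ((ℕᵒᵈ ×ₗ γ) ⊕ₗ δ) := by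
    rcases hd with hd | hd
    · exact hmax_sum_right hd.hmax
    · exact hmax_sum_left hd maxP3
  have nominQ : ¬HMin ((ℕᵒᵈ ×ₗ γ) ⊕ₗ δ) := fun h => nominP3 (hmin_sum_inv h neP3)
  have fpQ : LOfp (BLinOrd.of ((ℕᵒᵈ ×ₗ γ) ⊕ₗ δ)) := by
    rcases hd with hd | hd
    · exact LOfp.add fpP3 hd.fp
    · exact LOfp.iso fpP3 ⟨(sumEmptyR hd).symm⟩
  -- the part `R := (ℕ ×ₗ β) ⊕ₗ Q`
  have discR : IsDiscreteLO ((ℕ ×ₗ β) ⊕ₗ ((ℕᵒᵈ ×ₗ γ) ⊕ₗ δ)) :=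
    disc_sum discP2 discQ (Or.inr (Or.inr (iff_of_false nomaxP2 nominQ)))
  have minR : HMin ((ℕ ×ₗ β) ⊕ₗ ((ℕᵒᵈ ×ₗ γ) ⊕ₗ δ)) := hmin_sum_left minP2
  have maxR : HMax ((ℕ ×ₗ β) ⊕ₗ ((ℕᵒᵈ ×ₗ γ) ⊕ₗ δ)) := hmax_sum_right maxQ
  have fpR : LOfp (BLinOrd.of ((ℕ ×ₗ β) ⊕ₗ ((ℕᵒᵈ ×ₗ γ) ⊕ₗ δ))) := LOfp.add fpP2 fpQ
  -- total
  rcases ha with ha | ha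
  · exact ⟨LOfp.add ha.fp fpR,
      disc_sum ha.disc discR (Or.inr (Or.inr (iff_of_true ha.hmax minR))),
      hmin_sum_left ha.hmin, hmax_sum_right maxR⟩
  · exact ⟨LOfp.iso fpR ⟨(sumEmptyL ha).symm⟩,
      disc_sum (disc_of_empty ha) discR (Or.inl ha),
      hmin_sum_right ha minR, hmax_sum_right maxR⟩

end DLO

open DLO

/-- statement `S10` : discrete fp with a minimum and no maximum. -/
def S10 (X : BLinOrd) : Prop :=
  IsDiscreteLO X.carrier → HMin X.carrier → (∀ a : X.carrier, ∃ b, a < b) →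
    ∃ L1 L2 : BLinOrd, dLOfp11 L2 ∧ (dLOfp11 L1 ∨ IsEmpty L1.carrier) ∧
      Nonempty (X.carrier ≃o (L1.carrier ⊕ₗ (ℕ ×ₗ L2.carrier)))

/-- statement `S01` : discrete fp with a maximum and no minimum. -/
def S01 (X : BLinOrd) : Prop :=
  IsDiscreteLO X.carrier → HMax X.carrier → (∀ a : X.carrier, ∃ b, b < a) →
    ∃ L1 L2 : BLinOrd, dLOfp11 L2 ∧ (dLOfp11 L1 ∨ IsEmpty L1.carrier) ∧
      Nonempty (X.carrier ≃o ((ℕᵒᵈ ×ₗ L2.carrier) ⊕ₗ L1.carrier))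

/-- statement `S00` : discrete fp nonempty with no minimum and no maximum. -/
def S00 (X : BLinOrd) : Prop :=
  IsDiscreteLO X.carrier → Nonempty X.carrier → (∀ a : X.carrier, ∃ b, b < a) →
    (∀ a : X.carrier, ∃ b, a < b) →
    ∃ A M B : BLinOrd, dLOfp11 A ∧ dLOfp11 B ∧ (dLOfp11 M ∨ IsEmpty M.carrier) ∧
      Nonempty (X.carrier ≃o ((ℕᵒᵈ ×ₗ A.carrier) ⊕ₗ (M.carrier ⊕ₗ (ℕ ×ₗ B.carrier))))

theorem main_structure (X : BLinOrd) (h : LOfp X) : S10 X ∧ S01 X ∧ S00 X := by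
  induction h with
  | empty =>
    refine ⟨?_, ?_, ?_⟩
    · rintro _ ⟨m, _⟩ _
      exact m.elim0
    · rintro _ ⟨m, _⟩ _
      exact m.elim0
    · rintro _ ⟨m⟩ _ _
      exact m.elim0
  | one =>
    refine ⟨?_, ?_, ?_⟩
    · rintro _ _ hnomax
      obtain ⟨b, hb⟩ := hnomax ((0 : Fin 1))
      exact ((by decide : ∀ x y : Fin 1, ¬ x < y) 0 b hb).elim
    · rintro _ _ hnomin
      obtain ⟨b, hb⟩ := hnomin ((0 : Fin 1))
      exact ((by decide : ∀ x y : Fin 1, ¬ x < y) b 0 hb).elim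
    · rintro _ _ hnomin _
      obtain ⟨b, hb⟩ := hnomin ((0 : Fin 1))
      exact ((by decide : ∀ x y : Fin 1, ¬ x < y) b 0 hb).elim
  | @iso X Y _ hne ih =>
    obtain ⟨e⟩ := hne
    refine ⟨?_, ?_, ?_⟩
    · intro hd hm hnm
      obtain ⟨L1, L2, h1, h2, ⟨e0⟩⟩ :=
        ih.1 (disc_iso e.symm hd) (hmin_iso e.symm hm) (nomax_iso e.symm hnm)
      exact ⟨L1, L2, h1, h2, ⟨e.symm.trans e0⟩⟩
    · intro hd hm hnm
      obtain ⟨L1, L2, h1, h2, ⟨e0⟩⟩ :=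
        ih.2.1 (disc_iso e.symm hd) (hmax_iso e.symm hm) (nomin_iso e.symm hnm)
      exact ⟨L1, L2, h1, h2, ⟨e.symm.trans e0⟩⟩
    · intro hd hne' hnm hnx
      obtain ⟨A, M, B, h1, h2, h3, ⟨e0⟩⟩ :=
        ih.2.2 (disc_iso e.symm hd) ⟨e.symm hne'.some⟩ (nomin_iso e.symm hnm)
          (nomax_iso e.symm hnx)
      exact ⟨A, M, B, h1, h2, h3, ⟨e.symm.trans e0⟩⟩
  | @add X Y hX hY ihX ihY =>
    refine ⟨?_, ?_, ?_⟩
    -- S10 for X + Y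
    · intro hdisc hmin hnomax
      by_cases hBe : IsEmpty Y.carrier
      · obtain ⟨L1, L2, h1, h2, ⟨e0⟩⟩ :=
          ihX.1 (disc_iso (sumEmptyR hBe) hdisc) (hmin_iso (sumEmptyR hBe) hmin)
            (nomax_iso (sumEmptyR hBe) hnomax)
        exact ⟨L1, L2, h1, h2, ⟨(sumEmptyR hBe).trans e0⟩⟩
      · have hBne : Nonempty Y.carrier := not_isEmpty_iff.1 hBe
        by_cases hAe : IsEmpty X.carrier
        · obtain ⟨L1, L2, h1, h2, ⟨e0⟩⟩ :=
            ihY.1 (disc_iso (sumEmptyL hAe) hdisc) (hmin_iso (sumEmptyL hAe) hmin)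
              (nomax_iso (sumEmptyL hAe) hnomax)
          exact ⟨L1, L2, h1, h2, ⟨(sumEmptyL hAe).trans e0⟩⟩
        · have hAne : Nonempty X.carrier := not_isEmpty_iff.1 hAe
          have discA := disc_sum_left hdisc
          have discB := disc_sum_right hdisc
          have hminA : HMin X.carrier := hmin_sum_inv hmin hAne
          have hnomaxB : ∀ b : Y.carrier, ∃ b', b < b' := nomax_sum_right hnomax
          by_cases hBmin : HMin Y.carrier
          · have hAmax : HMax X.carrier := sum_hmax_left hdisc hAne hBmin
            have dX : D11 X.carrier := ⟨hX, discA, hminA, hAmax⟩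
            obtain ⟨L1, L2, h1, h2, ⟨e0⟩⟩ := ihY.1 discB hBmin hnomaxB
            refine ⟨BLinOrd.of (X.carrier ⊕ₗ L1.carrier), L2, h1,
              d11e_sum (Or.inl dX) h2, ?_⟩
            exact ⟨(congrL e0).trans (asc X.carrier L1.carrier (ℕ ×ₗ L2.carrier)).symm⟩
          · have hAnomax : ¬HMax X.carrier := fun hm => hBmin (sum_hmin_right hdisc hm hBne)
            obtain ⟨A0, M0, B0, dA0, dB0, dM0, ⟨e0⟩⟩ :=
              ihY.2.2 discB hBne (nomin_of_not_hmin hBmin) hnomaxB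
            obtain ⟨X1, X2, dX2, dX1, ⟨e1⟩⟩ :=
              ihX.1 discA hminA (nomax_of_not_hmax hAnomax)
            refine ⟨BLinOrd.of (X1.carrier ⊕ₗ ((ℕ ×ₗ X2.carrier) ⊕ₗ
              ((ℕᵒᵈ ×ₗ A0.carrier) ⊕ₗ M0.carrier))), B0, dB0,
              Or.inl (d11_core dX1 dX2 dA0 dM0), ?_⟩
            exact ⟨(sumCongr e1 e0).trans reb5⟩
    -- S01 for X + Y
    · intro hdisc hmax hnomin
      by_cases hAe : IsEmpty X.carrier
      · obtain ⟨L1, L2, h1, h2, ⟨e0⟩⟩ :=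
          ihY.2.1 (disc_iso (sumEmptyL hAe) hdisc) (hmax_iso (sumEmptyL hAe) hmax)
            (nomin_iso (sumEmptyL hAe) hnomin)
        exact ⟨L1, L2, h1, h2, ⟨(sumEmptyL hAe).trans e0⟩⟩
      · have hAne : Nonempty X.carrier := not_isEmpty_iff.1 hAe
        by_cases hBe : IsEmpty Y.carrier
        · obtain ⟨L1, L2, h1, h2, ⟨e0⟩⟩ :=
            ihX.2.1 (disc_iso (sumEmptyR hBe) hdisc) (hmax_iso (sumEmptyR hBe) hmax)
              (nomin_iso (sumEmptyR hBe) hnomin)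
          exact ⟨L1, L2, h1, h2, ⟨(sumEmptyR hBe).trans e0⟩⟩
        · have hBne : Nonempty Y.carrier := not_isEmpty_iff.1 hBe
          have discA := disc_sum_left hdisc
          have discB := disc_sum_right hdisc
          have hBmax : HMax Y.carrier := hmax_sum_inv hmax hBne
          have hAnomin : ∀ a : X.carrier, ∃ b, b < a := nomin_sum_left hAne hnomin
          by_cases hAmax : HMax X.carrier
          · have hBmin : HMin Y.carrier := sum_hmin_right hdisc hAmax hBne
            have dY : D11 Y.carrier := ⟨hY, discB, hBmin, hBmax⟩
            obtain ⟨L1, L2, h1, h2, ⟨e0⟩⟩ := ihX.2.1 discA hAmax hAnomin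
            refine ⟨BLinOrd.of (L1.carrier ⊕ₗ Y.carrier), L2, h1,
              d11e_sum h2 (Or.inl dY), ?_⟩
            exact ⟨(congrR e0).trans (asc (ℕᵒᵈ ×ₗ L2.carrier) L1.carrier Y.carrier)⟩
          · have hBnomin : ¬HMin Y.carrier := fun hm => hAmax (sum_hmax_left hdisc hAne hm)
            obtain ⟨A0, M0, B0, dA0, dB0, dM0, ⟨e0⟩⟩ :=
              ihX.2.2 discA hAne hAnomin (nomax_of_not_hmax hAmax)
            obtain ⟨L1, L2, dL2, dL1, ⟨e1⟩⟩ :=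
              ihY.2.1 discB hBmax (nomin_of_not_hmin hBnomin)
            refine ⟨BLinOrd.of (M0.carrier ⊕ₗ ((ℕ ×ₗ B0.carrier) ⊕ₗ
              ((ℕᵒᵈ ×ₗ L2.carrier) ⊕ₗ L1.carrier))), A0, dA0,
              Or.inl (d11_core dM0 dB0 dL2 dL1), ?_⟩
            refine ⟨(sumCongr e0 e1).trans ?_⟩
            exact (asc (ℕᵒᵈ ×ₗ A0.carrier) (M0.carrier ⊕ₗ (ℕ ×ₗ B0.carrier))
              ((ℕᵒᵈ ×ₗ L2.carrier) ⊕ₗ L1.carrier)).trans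
              (congrL (asc M0.carrier (ℕ ×ₗ B0.carrier)
                ((ℕᵒᵈ ×ₗ L2.carrier) ⊕ₗ L1.carrier)))
    -- S00 for X + Y
    · intro hdisc hne hnomin hnomax
      by_cases hAe : IsEmpty X.carrier
      · have hBne : Nonempty Y.carrier := by
          rcases hne.some with a | b
          · exact (hAe.false a).elim
          · exact ⟨b⟩
        obtain ⟨A, M, B, h1, h2, h3, ⟨e0⟩⟩ :=
          ihY.2.2 (disc_iso (sumEmptyL hAe) hdisc) hBne
            (nomin_iso (sumEmptyL hAe) hnomin) (nomax_iso (sumEmptyL hAe) hnomax)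
        exact ⟨A, M, B, h1, h2, h3, ⟨(sumEmptyL hAe).trans e0⟩⟩
      · have hAne : Nonempty X.carrier := not_isEmpty_iff.1 hAe
        by_cases hBe : IsEmpty Y.carrier
        · obtain ⟨A, M, B, h1, h2, h3, ⟨e0⟩⟩ :=
            ihX.2.2 (disc_iso (sumEmptyR hBe) hdisc) hAne
              (nomin_iso (sumEmptyR hBe) hnomin) (nomax_iso (sumEmptyR hBe) hnomax)
          exact ⟨A, M, B, h1, h2, h3, ⟨(sumEmptyR hBe).trans e0⟩⟩
        · have hBne : Nonempty Y.carrier := not_isEmpty_iff.1 hBe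
          have discA := disc_sum_left hdisc
          have discB := disc_sum_right hdisc
          have hAnomin : ∀ a : X.carrier, ∃ b, b < a := nomin_sum_left hAne hnomin
          have hBnomax : ∀ b : Y.carrier, ∃ b', b < b' := nomax_sum_right hnomax
          by_cases hAmax : HMax X.carrier
          · have hBmin : HMin Y.carrier := sum_hmin_right hdisc hAmax hBne
            obtain ⟨L1a, A0, dA0, dL1a, ⟨e0⟩⟩ := ihX.2.1 discA hAmax hAnomin
            obtain ⟨L1b, B0, dB0, dL1b, ⟨e1⟩⟩ := ihY.1 discB hBmin hBnomax
            refine ⟨A0, BLinOrd.of (L1a.carrier ⊕ₗ L1b.carrier), B0, dA0, dB0,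
              d11e_sum dL1a dL1b, ?_⟩
            refine ⟨(sumCongr e0 e1).trans ?_⟩
            exact (asc (ℕᵒᵈ ×ₗ A0.carrier) L1a.carrier
              (L1b.carrier ⊕ₗ (ℕ ×ₗ B0.carrier))).trans
              (congrL (asc L1a.carrier L1b.carrier (ℕ ×ₗ B0.carrier)).symm)
          · have hBnomin : ¬HMin Y.carrier := fun hm => hAmax (sum_hmax_left hdisc hAne hm)
            obtain ⟨A0, M0, B0, dA0, dB0, dM0, ⟨e0⟩⟩ :=
              ihX.2.2 discA hAne hAnomin (nomax_of_not_hmax hAmax)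
            obtain ⟨A1, M1, B1, dA1, dB1, dM1, ⟨e1⟩⟩ :=
              ihY.2.2 discB hBne (nomin_of_not_hmin hBnomin) hBnomax
            refine ⟨A0, BLinOrd.of (M0.carrier ⊕ₗ ((ℕ ×ₗ B0.carrier) ⊕ₗ
              ((ℕᵒᵈ ×ₗ A1.carrier) ⊕ₗ M1.carrier))), B1, dA0, dB1,
              Or.inl (d11_core dM0 dB0 dA1 dM1), ?_⟩
            refine ⟨(sumCongr e0 e1).trans ?_⟩
            exact (asc (ℕᵒᵈ ×ₗ A0.carrier) (M0.carrier ⊕ₗ (ℕ ×ₗ B0.carrier))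
              ((ℕᵒᵈ ×ₗ A1.carrier) ⊕ₗ (M1.carrier ⊕ₗ (ℕ ×ₗ B1.carrier)))).trans
              (congrL reb5)
  | @mulOmega Z hZ ihZ =>
    refine ⟨?_, ?_, ?_⟩
    · intro hdisc hmin hnomax
      have hminC : HMin Z.carrier := hmin_natProd_inv hmin
      have hmaxC : HMax Z.carrier := natProd_min_to_max hdisc hminC
      have discC : IsDiscreteLO Z.carrier := disc_prod_factor hdisc
      refine ⟨BLinOrd.of (Fin 0), Z, ⟨hZ, discC, hminC, hmaxC⟩,
        Or.inr (inferInstanceAs (IsEmpty (Fin 0))), ?_⟩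
      exact ⟨(sumEmptyL (inferInstanceAs (IsEmpty (Fin 0)))).symm⟩
    · intro hdisc hmax hnomin
      obtain ⟨m, hm⟩ := hmax
      obtain ⟨y, hy⟩ := nomax_natProd m
      exact absurd (hm y) (not_le.2 hy)
    · intro hdisc hne hnomin hnomax
      have hCne : Nonempty Z.carrier := by
        obtain ⟨n, c⟩ := hne.some
        exact ⟨c⟩
      have hCnomin : ¬HMin Z.carrier := fun h => (not_hmin hnomin) (hmin_natProd h)
      have hCnomax : ¬HMax Z.carrier := fun h => hCnomin (natProd_max_to_min hdisc h)
      obtain ⟨A0, M0, B0, dA0, dB0, dM0, ⟨e0⟩⟩ :=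
        ihZ.2.2 (disc_prod_factor hdisc) hCne (nomin_of_not_hmin hCnomin)
          (nomax_of_not_hmax hCnomax)
      -- Z ≅ P ⊕ Q with P = ℕᵒᵈ×A0, Q = M0 ⊕ (ℕ×B0); then Z·ω ≅ P ⊕ (Q⊕P)·ω
      have dQP : D11 ((M0.carrier ⊕ₗ (ℕ ×ₗ B0.carrier)) ⊕ₗ (ℕᵒᵈ ×ₗ A0.carrier)) := by
        refine d11_iso (d11_core (δ := Fin 0) dM0 dB0 dA0 (Or.inr (inferInstanceAs (IsEmpty (Fin 0))))) ?_
        exact (congrL (congrL (sumEmptyR (inferInstanceAs (IsEmpty (Fin 0)))))).trans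
          (asc M0.carrier (ℕ ×ₗ B0.carrier) (ℕᵒᵈ ×ₗ A0.carrier)).symm
      refine ⟨A0, BLinOrd.of (Fin 0),
        BLinOrd.of ((M0.carrier ⊕ₗ (ℕ ×ₗ B0.carrier)) ⊕ₗ (ℕᵒᵈ ×ₗ A0.carrier)),
        dA0, dQP, Or.inr (inferInstanceAs (IsEmpty (Fin 0))), ?_⟩
      refine ⟨(prodCongr e0).trans (rho.trans (congrL (sumEmptyL (inferInstanceAs (IsEmpty (Fin 0)))).symm))⟩
  | @mulOmegaStar Z hZ ihZ =>
    refine ⟨?_, ?_, ?_⟩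
    · intro hdisc hmin hnomax
      obtain ⟨m, hm⟩ := hmin
      obtain ⟨y, hy⟩ := nomin_natDualProd m
      exact absurd (hm y) (not_le.2 hy)
    · intro hdisc hmax hnomin
      have hmaxC : HMax Z.carrier := hmax_natDualProd_inv hmax
      have hminC : HMin Z.carrier := natDualProd_max_to_min hdisc hmaxC
      have discC : IsDiscreteLO Z.carrier := disc_prod_factor hdisc
      refine ⟨BLinOrd.of (Fin 0), Z, ⟨hZ, discC, hminC, hmaxC⟩,
        Or.inr (inferInstanceAs (IsEmpty (Fin 0))), ?_⟩
      exact ⟨(sumEmptyR (inferInstanceAs (IsEmpty (Fin 0)))).symm⟩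
    · intro hdisc hne hnomin hnomax
      have hCne : Nonempty Z.carrier := by
        obtain ⟨n, c⟩ := hne.some
        exact ⟨c⟩
      have hCnomax : ¬HMax Z.carrier := fun h => (not_hmax hnomax) (hmax_natDualProd h)
      have hCnomin : ¬HMin Z.carrier := fun h => hCnomax (natDualProd_min_to_max hdisc h)
      obtain ⟨A0, M0, B0, dA0, dB0, dM0, ⟨e0⟩⟩ :=
        ihZ.2.2 (disc_prod_factor hdisc) hCne (nomin_of_not_hmin hCnomin)
          (nomax_of_not_hmax hCnomax)
      have dQP : D11 ((M0.carrier ⊕ₗ (ℕ ×ₗ B0.carrier)) ⊕ₗ (ℕᵒᵈ ×ₗ A0.carrier)) := by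
        refine d11_iso (d11_core (δ := Fin 0) dM0 dB0 dA0 (Or.inr (inferInstanceAs (IsEmpty (Fin 0))))) ?_
        exact (congrL (congrL (sumEmptyR (inferInstanceAs (IsEmpty (Fin 0)))))).trans
          (asc M0.carrier (ℕ ×ₗ B0.carrier) (ℕᵒᵈ ×ₗ A0.carrier)).symm
      refine ⟨BLinOrd.of ((M0.carrier ⊕ₗ (ℕ ×ₗ B0.carrier)) ⊕ₗ (ℕᵒᵈ ×ₗ A0.carrier)),
        M0, B0, dQP, dB0, dM0, ?_⟩
      exact ⟨(prodCongr e0).trans rhoStar⟩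
/-- a nonempty discrete finitely presented linear order with a minimum and
with no maximum is isomorphic to `L₁ + L₂·ω` with `L₂ ∈ dLO_fp¹¹` and
`L₁ ∈ dLO_fp¹¹ ∪ {𝟎}`. -/
theorem dLOfp10_structure (X : BLinOrd) (hne : Nonempty X.carrier) (hfp : LOfp X)
    (hdisc : IsDiscreteLO X.carrier)
    (hmin : ∃ m : X.carrier, ∀ x, m ≤ x)
    (hnomax : ∀ a : X.carrier, ∃ b, a < b) :
    ∃ L1 L2 : BLinOrd, dLOfp11 L2 ∧ (dLOfp11 L1 ∨ IsEmpty L1.carrier) ∧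
      Nonempty (X.carrier ≃o (L1.carrier ⊕ₗ (ℕ ×ₗ L2.carrier))) := by
  exact (main_structure X hfp).1 hdisc hmin hnomax
end

section
/- If L is a nonempty linear order in dLO_fp⁰⁰ (discrete, finitely presented, with no minimum and no maximum element), then there exist L₁, L₃ ∈ dLO_fp¹¹ and L₂ ∈ dLO_fp¹¹ ∪ {𝟎} such that L ≅ L₁·ω* + L₂ + L₃·ω. -/
set_option linter.unusedSectionVars false
set_option linter.unusedVariables false


open Sum

variable {α β γ δ : Type*}

def HasMin (α : Type*) [LinearOrder α] : Prop := ∃ a : α, ∀ x, a ≤ x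
def HasMax (α : Type*) [LinearOrder α] : Prop := ∃ a : α, ∀ x, x ≤ a

section Isos
variable [LinearOrder α] [LinearOrder β] [LinearOrder γ] [LinearOrder δ]

def oSumCongr (e₁ : α ≃o β) (e₂ : γ ≃o δ) : (α ⊕ₗ γ) ≃o (β ⊕ₗ δ) where
  toEquiv := Equiv.sumCongr e₁.toEquiv e₂.toEquiv
  map_rel_iff' := by
    rintro (a | a) (b | b)
    · exact Lex.inl_le_inl_iff.trans (e₁.map_rel_iff.trans Lex.inl_le_inl_iff.symm)
    · exact iff_of_true (Lex.inl_le_inr _ _) (Lex.inl_le_inr _ _)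
    · exact iff_of_false Lex.not_inr_le_inl Lex.not_inr_le_inl
    · exact Lex.inr_le_inr_iff.trans (e₂.map_rel_iff.trans Lex.inr_le_inr_iff.symm)

def oSumEmptyLeft (α β : Type*) [LinearOrder α] [LinearOrder β] [IsEmpty α] : (α ⊕ₗ β) ≃o β where
  toFun x := (ofLex x).elim (fun a => isEmptyElim a) id
  invFun y := toLex (inr y)
  left_inv x := by
    rcases x with a | b
    · exact isEmptyElim a
    · rfl
  right_inv y := rfl
  map_rel_iff' := by
    rintro (a | a) (b | b)
    · exact isEmptyElim a
    · exact isEmptyElim a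
    · exact isEmptyElim b
    · show (a:β) ≤ b ↔ toLex (inr a) ≤ toLex (inr b)
      exact Lex.inr_le_inr_iff.symm

def oSumEmptyRight (α β : Type*) [LinearOrder α] [LinearOrder β] [IsEmpty β] : (α ⊕ₗ β) ≃o α where
  toFun x := (ofLex x).elim id (fun b => isEmptyElim b)
  invFun y := toLex (inl y)
  left_inv x := by
    rcases x with a | b
    · rfl
    · exact isEmptyElim b
  right_inv y := rfl
  map_rel_iff' := by
    rintro (a | a) (b | b)
    · show (a:α) ≤ b ↔ toLex (inl a) ≤ toLex (inl b)
      exact Lex.inl_le_inl_iff.symm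
    · exact isEmptyElim b
    · exact isEmptyElim a
    · exact isEmptyElim a

def oProdCongr (γ : Type*) [LinearOrder γ] (e : α ≃o β) : (γ ×ₗ α) ≃o (γ ×ₗ β) where
  toFun x := toLex ((ofLex x).1, e (ofLex x).2)
  invFun x := toLex ((ofLex x).1, e.symm (ofLex x).2)
  left_inv x := by
    rcases x with ⟨n, a⟩
    show toLex (n, e.symm (e a)) = toLex (n, a)
    simp
  right_inv x := by
    rcases x with ⟨n, b⟩
    show toLex (n, e (e.symm b)) = toLex (n, b)
    simp
  map_rel_iff' := by
    rintro ⟨n, a⟩ ⟨m, b⟩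
    show toLex (n, e a) ≤ toLex (m, e b) ↔ toLex (n, a) ≤ toLex (m, b)
    rw [Prod.Lex.le_iff, Prod.Lex.le_iff]
    simp [e.map_rel_iff]
end Isos


section Rot
variable (P Q : Type*) [LinearOrder P] [LinearOrder Q]

def rotFun : ℕ ×ₗ (P ⊕ₗ Q) → P ⊕ₗ (ℕ ×ₗ (Q ⊕ₗ P)) := fun x =>
  match ofLex (ofLex x).2, (ofLex x).1 with
  | Sum.inr q, n => toLex (Sum.inr (toLex (n, toLex (Sum.inl q))))
  | Sum.inl p, 0 => toLex (Sum.inl p)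
  | Sum.inl p, n+1 => toLex (Sum.inr (toLex (n, toLex (Sum.inr p))))

theorem rotFun_strictMono : StrictMono (rotFun P Q) := by
  rintro ⟨n, s | s⟩ ⟨m, t | t⟩ h <;>
    (change toLex (n, _) < toLex (m, _) at h; rw [Prod.Lex.toLex_lt_toLex] at h; dsimp only at h)
  · -- inl, inl
    rcases n with _ | n <;> rcases m with _ | m
    · exact Lex.inl_lt_inl_iff.2 (by
        rcases h with h | ⟨-, h⟩
        · omega
        · exact Lex.inl_lt_inl_iff.1 h)
    · exact Lex.inl_lt_inr _ _
    · exfalso; rcases h with h | ⟨h, -⟩ <;> omega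
    · refine Lex.inr_lt_inr_iff.2 (Prod.Lex.toLex_lt_toLex.2 ?_)
      rcases h with h | ⟨h, hst⟩
      · exact Or.inl (by omega)
      · exact Or.inr ⟨by omega, Lex.inr_lt_inr_iff.2 (Lex.inl_lt_inl_iff.1 hst)⟩
  · -- inl, inr
    rcases n with _ | n
    · exact Lex.inl_lt_inr _ _
    · refine Lex.inr_lt_inr_iff.2 ?_
      show toLex ((n : ℕ), toLex (Sum.inr s)) < toLex (m, toLex (Sum.inl t))
      refine Prod.Lex.toLex_lt_toLex.2 (Or.inl ?_)
      rcases h with h | ⟨h, -⟩ <;> omega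
  · -- inr, inl
    have hnm : n < m := by
      rcases h with h | ⟨-, h⟩
      · exact h
      · exact absurd h Lex.not_inr_lt_inl
    rcases m with _ | m
    · omega
    · refine Lex.inr_lt_inr_iff.2 ?_
      show toLex ((n : ℕ), toLex (Sum.inl s)) < toLex (m, toLex (Sum.inr t))
      refine Prod.Lex.toLex_lt_toLex.2 ?_
      rcases Nat.lt_or_ge n m with h' | h'
      · exact Or.inl h'
      · exact Or.inr ⟨by omega, Lex.inl_lt_inr _ _⟩
  · -- inr, inr
    refine Lex.inr_lt_inr_iff.2 ?_
    show toLex ((n : ℕ), toLex (Sum.inl s)) < toLex (m, toLex (Sum.inl t))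
    refine Prod.Lex.toLex_lt_toLex.2 ?_
    rcases h with h | ⟨h, hst⟩
    · exact Or.inl h
    · exact Or.inr ⟨h, Lex.inl_lt_inl_iff.2 (Lex.inr_lt_inr_iff.1 hst)⟩

theorem rotFun_surjective : Function.Surjective (rotFun P Q) := by
  rintro (p | ⟨n, q | p⟩)
  · exact ⟨toLex (0, toLex (Sum.inl p)), rfl⟩
  · exact ⟨toLex (n, toLex (Sum.inr q)), rfl⟩
  · exact ⟨toLex (n + 1, toLex (Sum.inl p)), rfl⟩

noncomputable def rotOmega : (ℕ ×ₗ (P ⊕ₗ Q)) ≃o (P ⊕ₗ (ℕ ×ₗ (Q ⊕ₗ P))) :=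
  (rotFun_strictMono P Q).orderIsoOfSurjective _ (rotFun_surjective P Q)
end Rot

section RotStar
variable (P Q : Type*) [LinearOrder P] [LinearOrder Q]

def rotFunStar : ℕᵒᵈ ×ₗ (P ⊕ₗ Q) → (ℕᵒᵈ ×ₗ (Q ⊕ₗ P)) ⊕ₗ Q := fun x =>
  match ofLex (ofLex x).2, (ofLex x).1 with
  | Sum.inl p, n => toLex (Sum.inl (toLex (n, toLex (Sum.inr p))))
  | Sum.inr q, (0 : ℕ) => toLex (Sum.inr q)
  | Sum.inr q, (Nat.succ n) => toLex (Sum.inl (toLex ((n : ℕᵒᵈ), toLex (Sum.inl q))))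

theorem rotFunStar_strictMono : StrictMono (rotFunStar P Q) := by
  have K : ∀ x : ℕᵒᵈ, ∃ N : ℕ, OrderDual.toDual N = x := fun x => ⟨OrderDual.ofDual x, rfl⟩
  rintro ⟨n, s | s⟩ ⟨m, t | t⟩ h
  · -- inl, inl
    obtain ⟨N, rfl⟩ := K n
    obtain ⟨M, rfl⟩ := K m
    replace h := Prod.Lex.toLex_lt_toLex.1 h
    refine Lex.inl_lt_inl_iff.2 (Prod.Lex.toLex_lt_toLex.2 ?_)
    rcases h with h | ⟨h, hst⟩
    · exact Or.inl h
    · exact Or.inr ⟨h, Lex.inr_lt_inr_iff.2 (Lex.inl_lt_inl_iff.1 hst)⟩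
  · -- inl, inr
    obtain ⟨N, rfl⟩ := K n
    obtain ⟨M, rfl⟩ := K m
    replace h := Prod.Lex.toLex_lt_toLex.1 h
    have hmn : M < N ∨ N = M := by
      rcases h with h | ⟨h, -⟩
      · exact Or.inl h
      · exact Or.inr (congrArg OrderDual.ofDual h)
    rcases M with _ | M
    · exact Lex.inl_lt_inr _ _
    · refine Lex.inl_lt_inl_iff.2 (Prod.Lex.toLex_lt_toLex.2 (Or.inl ?_))
      exact show M < N by omega
  · -- inr, inl
    obtain ⟨N, rfl⟩ := K n
    obtain ⟨M, rfl⟩ := K m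
    replace h := Prod.Lex.toLex_lt_toLex.1 h
    have hmn : M < N := by
      rcases h with h | ⟨-, h⟩
      · exact h
      · exact absurd h Lex.not_inr_lt_inl
    rcases N with _ | N
    · omega
    · refine Lex.inl_lt_inl_iff.2 (Prod.Lex.toLex_lt_toLex.2 ?_)
      rcases Nat.lt_or_ge M N with h' | h'
      · exact Or.inl (show OrderDual.toDual N < OrderDual.toDual M from show M < N from h')
      · exact Or.inr ⟨show OrderDual.toDual N = OrderDual.toDual M from
          congrArg _ (by omega : N = M), Lex.inl_lt_inr _ _⟩
  · -- inr, inr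
    obtain ⟨N, rfl⟩ := K n
    obtain ⟨M, rfl⟩ := K m
    replace h := Prod.Lex.toLex_lt_toLex.1 h
    have hmn : M < N ∨ (N = M ∧ s < t) := by
      rcases h with h | ⟨h, hst⟩
      · exact Or.inl h
      · exact Or.inr ⟨congrArg OrderDual.ofDual h, Lex.inr_lt_inr_iff.1 hst⟩
    rcases N with _ | N <;> rcases M with _ | M
    · refine Lex.inr_lt_inr_iff.2 ?_
      rcases hmn with h | ⟨-, hst⟩
      · omega
      · exact hst
    · exfalso; rcases hmn with h | ⟨h, -⟩ <;> omega
    · exact Lex.inl_lt_inr _ _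
    · refine Lex.inl_lt_inl_iff.2 (Prod.Lex.toLex_lt_toLex.2 ?_)
      rcases hmn with h | ⟨h, hst⟩
      · exact Or.inl (show OrderDual.toDual N < OrderDual.toDual M from show M < N by omega)
      · exact Or.inr ⟨show OrderDual.toDual N = OrderDual.toDual M from
          congrArg _ (by omega : N = M), Lex.inl_lt_inl_iff.2 hst⟩

theorem rotFunStar_surjective : Function.Surjective (rotFunStar P Q) := by
  rintro (⟨n, q | p⟩ | q)
  · exact ⟨toLex (OrderDual.toDual (OrderDual.ofDual n + 1), toLex (Sum.inr q)), rfl⟩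
  · exact ⟨toLex (n, toLex (Sum.inl p)), rfl⟩
  · exact ⟨toLex (OrderDual.toDual 0, toLex (Sum.inr q)), rfl⟩

noncomputable def rotOmegaStar : (ℕᵒᵈ ×ₗ (P ⊕ₗ Q)) ≃o ((ℕᵒᵈ ×ₗ (Q ⊕ₗ P)) ⊕ₗ Q) :=
  (rotFunStar_strictMono P Q).orderIsoOfSurjective _ (rotFunStar_surjective P Q)
end RotStar


section Transfer
variable {α β : Type*} [LinearOrder α] [LinearOrder β]

theorem hasMin_of_iso (e : α ≃o β) (h : HasMin α) : HasMin β := by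
  obtain ⟨a, ha⟩ := h
  refine ⟨e a, fun y => ?_⟩
  rw [← e.apply_symm_apply y, e.le_iff_le]
  exact ha _

theorem hasMax_of_iso (e : α ≃o β) (h : HasMax α) : HasMax β := by
  obtain ⟨a, ha⟩ := h
  refine ⟨e a, fun y => ?_⟩
  rw [← e.apply_symm_apply y, e.le_iff_le]
  exact ha _

theorem discrete_of_iso (e : α ≃o β) (h : IsDiscreteLO α) : IsDiscreteLO β := by
  constructor
  · intro b ⟨b', hb'⟩
    obtain ⟨c, hc⟩ := h.1 (e.symm b) ⟨e.symm b', e.symm.strictMono hb'⟩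
    exact ⟨e c, by simpa using (apply_covBy_apply_iff e).2 hc⟩
  · intro b ⟨b', hb'⟩
    obtain ⟨c, hc⟩ := h.2 (e.symm b) ⟨e.symm b', e.symm.strictMono hb'⟩
    exact ⟨e c, by simpa using (apply_covBy_apply_iff e).2 hc⟩
end Transfer

section SumLemmas
variable {α β : Type*} [LinearOrder α] [LinearOrder β]

theorem covBy_inl {a b : α} (h : a ⋖ b) :
    (toLex (Sum.inl a) : α ⊕ₗ β) ⋖ toLex (Sum.inl b) := by
  refine ⟨Lex.inl_lt_inl_iff.2 h.1, ?_⟩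
  rintro (c | c) h1 h2
  · exact h.2 (Lex.inl_lt_inl_iff.1 h1) (Lex.inl_lt_inl_iff.1 h2)
  · exact Lex.not_inr_lt_inl h2

theorem covBy_inr {a b : β} (h : a ⋖ b) :
    (toLex (Sum.inr a) : α ⊕ₗ β) ⋖ toLex (Sum.inr b) := by
  refine ⟨Lex.inr_lt_inr_iff.2 h.1, ?_⟩
  rintro (c | c) h1 h2
  · exact Lex.not_inr_lt_inl h1
  · exact h.2 (Lex.inr_lt_inr_iff.1 h1) (Lex.inr_lt_inr_iff.1 h2)

theorem covBy_sep {a : α} {b : β} (ha : ∀ x, x ≤ a) (hb : ∀ y, b ≤ y) :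
    (toLex (Sum.inl a) : α ⊕ₗ β) ⋖ toLex (Sum.inr b) := by
  refine ⟨Lex.inl_lt_inr _ _, ?_⟩
  rintro (c | c) h1 h2
  · exact absurd (Lex.inl_lt_inl_iff.1 h1) (not_lt.2 (ha c))
  · exact absurd (Lex.inr_lt_inr_iff.1 h2) (not_lt.2 (hb c))

theorem isDiscrete_sum (hα : IsDiscreteLO α) (hβ : IsDiscreteLO β)
    (hj : Nonempty α → Nonempty β → (HasMax α ↔ HasMin β)) :
    IsDiscreteLO (α ⊕ₗ β) := by
  constructor
  · rintro (x | x) ⟨b, hb⟩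
    · by_cases hx : ∃ x', x < x'
      · obtain ⟨y, hy⟩ := hα.1 x hx
        exact ⟨toLex (Sum.inl y), covBy_inl hy⟩
      · have hxmax : HasMax α := ⟨x, fun z => not_lt.1 fun hz => hx ⟨z, hz⟩⟩
        rcases b with b | b
        · exact absurd (Lex.inl_lt_inl_iff.1 hb) (fun hz => hx ⟨b, hz⟩)
        · obtain ⟨m, hm⟩ := (hj ⟨x⟩ ⟨b⟩).1 hxmax
          exact ⟨toLex (Sum.inr m), covBy_sep (fun z => not_lt.1 fun hz => hx ⟨z, hz⟩) hm⟩
    · rcases b with b | b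
      · exact absurd hb Lex.not_inr_lt_inl
      · obtain ⟨y, hy⟩ := hβ.1 x ⟨b, Lex.inr_lt_inr_iff.1 hb⟩
        exact ⟨toLex (Sum.inr y), covBy_inr hy⟩
  · rintro (x | x) ⟨b, hb⟩
    · rcases b with b | b
      · obtain ⟨y, hy⟩ := hα.2 x ⟨b, Lex.inl_lt_inl_iff.1 hb⟩
        exact ⟨toLex (Sum.inl y), covBy_inl hy⟩
      · exact absurd hb Lex.not_inr_lt_inl
    · by_cases hx : ∃ x', x' < x
      · obtain ⟨y, hy⟩ := hβ.2 x hx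
        exact ⟨toLex (Sum.inr y), covBy_inr hy⟩
      · have hxmin : HasMin β := ⟨x, fun z => not_lt.1 fun hz => hx ⟨z, hz⟩⟩
        rcases b with b | b
        · obtain ⟨M, hM⟩ := (hj ⟨b⟩ ⟨x⟩).2 hxmin
          exact ⟨toLex (Sum.inl M), covBy_sep hM (fun z => not_lt.1 fun hz => hx ⟨z, hz⟩)⟩
        · exact absurd (Lex.inr_lt_inr_iff.1 hb) (fun hz => hx ⟨b, hz⟩)

theorem isDiscrete_sum_inv (h : IsDiscreteLO (α ⊕ₗ β)) :
    IsDiscreteLO α ∧ IsDiscreteLO β ∧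
      (Nonempty α → Nonempty β → (HasMax α ↔ HasMin β)) := by
  refine ⟨⟨?_, ?_⟩, ⟨?_, ?_⟩, ?_⟩
  · intro x ⟨x', hx'⟩
    obtain ⟨c, hc⟩ := h.1 (toLex (Sum.inl x)) ⟨toLex (Sum.inl x'), Lex.inl_lt_inl_iff.2 hx'⟩
    rcases c with y | y
    · refine ⟨y, Lex.inl_lt_inl_iff.1 hc.1, fun z h1 h2 => ?_⟩
      exact hc.2 (Lex.inl_lt_inl_iff.2 h1) (Lex.inl_lt_inl_iff.2 h2)
    · exact absurd (Lex.inl_lt_inr x' y) (hc.2 (Lex.inl_lt_inl_iff.2 hx'))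
  · intro x ⟨x', hx'⟩
    obtain ⟨c, hc⟩ := h.2 (toLex (Sum.inl x)) ⟨toLex (Sum.inl x'), Lex.inl_lt_inl_iff.2 hx'⟩
    rcases c with y | y
    · refine ⟨y, Lex.inl_lt_inl_iff.1 hc.1, fun z h1 h2 => ?_⟩
      exact hc.2 (Lex.inl_lt_inl_iff.2 h1) (Lex.inl_lt_inl_iff.2 h2)
    · exact absurd hc.1 Lex.not_inr_lt_inl
  · intro x ⟨x', hx'⟩
    obtain ⟨c, hc⟩ := h.1 (toLex (Sum.inr x)) ⟨toLex (Sum.inr x'), Lex.inr_lt_inr_iff.2 hx'⟩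
    rcases c with y | y
    · exact absurd hc.1 Lex.not_inr_lt_inl
    · refine ⟨y, Lex.inr_lt_inr_iff.1 hc.1, fun z h1 h2 => ?_⟩
      exact hc.2 (Lex.inr_lt_inr_iff.2 h1) (Lex.inr_lt_inr_iff.2 h2)
  · intro x ⟨x', hx'⟩
    obtain ⟨c, hc⟩ := h.2 (toLex (Sum.inr x)) ⟨toLex (Sum.inr x'), Lex.inr_lt_inr_iff.2 hx'⟩
    rcases c with y | y
    · exact absurd (Lex.inl_lt_inr y x') (fun hh => hc.2 hh (Lex.inr_lt_inr_iff.2 hx'))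
    · refine ⟨y, Lex.inr_lt_inr_iff.1 hc.1, fun z h1 h2 => ?_⟩
      exact hc.2 (Lex.inr_lt_inr_iff.2 h1) (Lex.inr_lt_inr_iff.2 h2)
  · intro hna hnb
    constructor
    · rintro ⟨M, hM⟩
      obtain ⟨b0⟩ := hnb
      obtain ⟨c, hc⟩ := h.1 (toLex (Sum.inl M)) ⟨toLex (Sum.inr b0), Lex.inl_lt_inr _ _⟩
      rcases c with y | y
      · exact absurd (Lex.inl_lt_inl_iff.1 hc.1) (not_lt.2 (hM y))
      · refine ⟨y, fun z => not_lt.1 fun hz => ?_⟩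
        exact hc.2 (Lex.inl_lt_inr _ _) (Lex.inr_lt_inr_iff.2 hz)
    · rintro ⟨m, hm⟩
      obtain ⟨a0⟩ := hna
      obtain ⟨c, hc⟩ := h.2 (toLex (Sum.inr m)) ⟨toLex (Sum.inl a0), Lex.inl_lt_inr _ _⟩
      rcases c with y | y
      · refine ⟨y, fun z => not_lt.1 fun hz => ?_⟩
        exact hc.2 (Lex.inl_lt_inl_iff.2 hz) (Lex.inl_lt_inr _ _)
      · exact absurd (Lex.inr_lt_inr_iff.1 hc.1) (not_lt.2 (hm y))

theorem hasMin_sum_left (hne : Nonempty α) : HasMin (α ⊕ₗ β) ↔ HasMin α := by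
  constructor
  · rintro ⟨(a | a), ha⟩
    · exact ⟨a, fun x => Lex.inl_le_inl_iff.1 (ha (toLex (Sum.inl x)))⟩
    · obtain ⟨a0⟩ := hne
      exact absurd (ha (toLex (Sum.inl a0))) Lex.not_inr_le_inl
  · rintro ⟨a, ha⟩
    refine ⟨toLex (Sum.inl a), ?_⟩
    rintro (x | x)
    · exact Lex.inl_le_inl_iff.2 (ha x)
    · exact Lex.inl_le_inr _ _

theorem hasMax_sum_right (hne : Nonempty β) : HasMax (α ⊕ₗ β) ↔ HasMax β := by
  constructor
  · rintro ⟨(a | a), ha⟩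
    · obtain ⟨b0⟩ := hne
      exact absurd (ha (toLex (Sum.inr b0))) Lex.not_inr_le_inl
    · exact ⟨a, fun x => Lex.inr_le_inr_iff.1 (ha (toLex (Sum.inr x)))⟩
  · rintro ⟨a, ha⟩
    refine ⟨toLex (Sum.inr a), ?_⟩
    rintro (x | x)
    · exact Lex.inl_le_inr _ _
    · exact Lex.inr_le_inr_iff.2 (ha x)

theorem hasMin_sum_of_left (h : HasMin α) : HasMin (α ⊕ₗ β) := by
  obtain ⟨a, ha⟩ := h
  refine ⟨toLex (Sum.inl a), ?_⟩
  rintro (x | x)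
  · exact Lex.inl_le_inl_iff.2 (ha x)
  · exact Lex.inl_le_inr _ _

theorem hasMax_sum_of_right (h : HasMax β) : HasMax (α ⊕ₗ β) := by
  obtain ⟨a, ha⟩ := h
  refine ⟨toLex (Sum.inr a), ?_⟩
  rintro (x | x)
  · exact Lex.inl_le_inr _ _
  · exact Lex.inr_le_inr_iff.2 (ha x)

theorem not_hasMin_sum (hne : Nonempty α) (h : ¬ HasMin α) : ¬ HasMin (α ⊕ₗ β) := by
  intro hmin
  exact h ((hasMin_sum_left hne).1 hmin)

theorem not_hasMax_sum (hne : Nonempty β) (h : ¬ HasMax β) : ¬ HasMax (α ⊕ₗ β) := by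
  intro hmax
  exact h ((hasMax_sum_right hne).1 hmax)

instance sumLexIsEmpty [IsEmpty α] [IsEmpty β] : IsEmpty (α ⊕ₗ β) :=
  ⟨fun x => x.elim (fun a => IsEmpty.false a) (fun b => IsEmpty.false b)⟩
end SumLemmas

section ProdLemmas
variable {α : Type*} [LinearOrder α]

theorem covBy_prod_snd {n : ℕ} {x y : α} (h : x ⋖ y) :
    (toLex (n, x) : ℕ ×ₗ α) ⋖ toLex (n, y) := by
  refine ⟨(Prod.Lex.toLex_lt_toLex (x := (n, x)) (y := (n, y))).2 (Or.inr ⟨rfl, h.1⟩), ?_⟩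
  rintro ⟨k, z⟩ h1 h2
  replace h1 := (Prod.Lex.toLex_lt_toLex (x := (n, x)) (y := (k, z))).1 h1
  replace h2 := (Prod.Lex.toLex_lt_toLex (x := (k, z)) (y := (n, y))).1 h2
  rcases h1 with h1 | ⟨h1, h1'⟩ <;> rcases h2 with h2 | ⟨h2, h2'⟩
  · exact absurd h2 (by omega)
  · exact absurd h2 (by omega)
  · exact absurd h2 (by omega)
  · exact h.2 h1' h2'

theorem covBy_prod_step {n : ℕ} {M m : α} (hM : ∀ z, z ≤ M) (hm : ∀ z, m ≤ z) :
    (toLex (n, M) : ℕ ×ₗ α) ⋖ toLex (n + 1, m) := by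
  refine ⟨(Prod.Lex.toLex_lt_toLex (x := (n, M)) (y := (n + 1, m))).2 (Or.inl (by omega)), ?_⟩
  rintro ⟨k, z⟩ h1 h2
  replace h1 := (Prod.Lex.toLex_lt_toLex (x := (n, M)) (y := (k, z))).1 h1
  replace h2 := (Prod.Lex.toLex_lt_toLex (x := (k, z)) (y := (n + 1, m))).1 h2
  rcases h1 with h1 | ⟨h1, h1'⟩ <;> rcases h2 with h2 | ⟨h2, h2'⟩
  · omega
  · exact absurd h2' (not_lt.2 (hm z))
  · exact absurd h1' (not_lt.2 (hM z))
  · exact absurd h1' (not_lt.2 (hM z))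

theorem isDiscrete_omega (hd : IsDiscreteLO α) (hmin : HasMin α) (hmax : HasMax α) :
    IsDiscreteLO (ℕ ×ₗ α) := by
  obtain ⟨m0, hm0⟩ := hmin
  obtain ⟨M0, hM0⟩ := hmax
  constructor
  · rintro ⟨n, x⟩ -
    by_cases hx : ∃ y, x < y
    · obtain ⟨y, hy⟩ := hd.1 x hx
      exact ⟨toLex (n, y), covBy_prod_snd hy⟩
    · exact ⟨toLex (n + 1, m0), covBy_prod_step (fun z => not_lt.1 fun hz => hx ⟨z, hz⟩) hm0⟩
  · rintro ⟨n, x⟩ ⟨b, hb⟩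
    by_cases hx : ∃ y, y < x
    · obtain ⟨y, hy⟩ := hd.2 x hx
      exact ⟨toLex (n, y), covBy_prod_snd hy⟩
    · rcases n with _ | n
      · exfalso
        obtain ⟨k, z⟩ := b
        replace hb := (Prod.Lex.toLex_lt_toLex (x := (k, z)) (y := (0, x))).1 hb
        rcases hb with hb | ⟨hb, hb'⟩
        · exact absurd hb (by omega)
        · exact hx ⟨z, hb'⟩
      · exact ⟨toLex (n, M0), covBy_prod_step hM0 (fun z => not_lt.1 fun hz => hx ⟨z, hz⟩)⟩

theorem isDiscrete_omega_inv (h : IsDiscreteLO (ℕ ×ₗ α)) :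
    IsDiscreteLO α ∧ (HasMax α ↔ HasMin α) := by
  refine ⟨⟨?_, ?_⟩, ?_, ?_⟩
  · intro x ⟨x', hx'⟩
    obtain ⟨c, hc⟩ := h.1 (toLex (0, x))
      ⟨toLex (0, x'), (Prod.Lex.toLex_lt_toLex (x := (0, x)) (y := (0, x'))).2 (Or.inr ⟨rfl, hx'⟩)⟩
    obtain ⟨k, z⟩ := c
    have hk : k = 0 ∧ x < z := by
      have h1 := (Prod.Lex.toLex_lt_toLex (x := (0, x)) (y := (k, z))).1 hc.1
      rcases h1 with h1 | ⟨h1, h1'⟩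
      · exfalso
        exact hc.2 ((Prod.Lex.toLex_lt_toLex (x := (0, x)) (y := (0, x'))).2 (Or.inr ⟨rfl, hx'⟩))
          ((Prod.Lex.toLex_lt_toLex (x := (0, x')) (y := (k, z))).2 (Or.inl (by simpa using h1)))
      · exact ⟨h1.symm, h1'⟩
    obtain ⟨rfl, hxz⟩ := hk
    refine ⟨z, hxz, fun w hw1 hw2 => ?_⟩
    exact hc.2 ((Prod.Lex.toLex_lt_toLex (x := (0, x)) (y := (0, w))).2 (Or.inr ⟨rfl, hw1⟩))
      ((Prod.Lex.toLex_lt_toLex (x := (0, w)) (y := (0, z))).2 (Or.inr ⟨rfl, hw2⟩))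
  · intro x ⟨x', hx'⟩
    obtain ⟨c, hc⟩ := h.2 (toLex (0, x))
      ⟨toLex (0, x'), (Prod.Lex.toLex_lt_toLex (x := (0, x')) (y := (0, x))).2 (Or.inr ⟨rfl, hx'⟩)⟩
    obtain ⟨k, z⟩ := c
    have hk : k = 0 ∧ z < x := by
      have h1 := (Prod.Lex.toLex_lt_toLex (x := (k, z)) (y := (0, x))).1 hc.1
      rcases h1 with h1 | ⟨h1, h1'⟩
      · exact absurd h1 (by omega)
      · exact ⟨h1, h1'⟩
    obtain ⟨rfl, hxz⟩ := hk
    refine ⟨z, hxz, fun w hw1 hw2 => ?_⟩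
    exact hc.2 ((Prod.Lex.toLex_lt_toLex (x := (0, z)) (y := (0, w))).2 (Or.inr ⟨rfl, hw1⟩))
      ((Prod.Lex.toLex_lt_toLex (x := (0, w)) (y := (0, x))).2 (Or.inr ⟨rfl, hw2⟩))
  · rintro ⟨M, hM⟩
    obtain ⟨c, hc⟩ := h.1 (toLex (0, M))
      ⟨toLex (1, M), (Prod.Lex.toLex_lt_toLex (x := (0, M)) (y := (1, M))).2 (Or.inl one_pos)⟩
    obtain ⟨k, z⟩ := c
    have hk : 0 < k := by
      have h1 := (Prod.Lex.toLex_lt_toLex (x := (0, M)) (y := (k, z))).1 hc.1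
      rcases h1 with h1 | ⟨-, h1'⟩
      · exact h1
      · exact absurd h1' (not_lt.2 (hM z))
    refine ⟨z, fun w => not_lt.1 fun hw => ?_⟩
    refine hc.2 ((Prod.Lex.toLex_lt_toLex (x := (0, M)) (y := (1, w))).2 (Or.inl one_pos))
      ((Prod.Lex.toLex_lt_toLex (x := (1, w)) (y := (k, z))).2 ?_)
    rcases Nat.lt_or_ge 1 k with h' | h'
    · exact Or.inl h'
    · exact Or.inr ⟨by omega, hw⟩
  · rintro ⟨m, hm⟩
    obtain ⟨c, hc⟩ := h.2 (toLex (1, m))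
      ⟨toLex (0, m), (Prod.Lex.toLex_lt_toLex (x := (0, m)) (y := (1, m))).2 (Or.inl one_pos)⟩
    obtain ⟨k, z⟩ := c
    have hk : k = 0 := by
      have h1 := (Prod.Lex.toLex_lt_toLex (x := (k, z)) (y := (1, m))).1 hc.1
      rcases h1 with h1 | ⟨-, h1'⟩
      · omega
      · exact absurd h1' (not_lt.2 (hm z))
    subst hk
    refine ⟨z, fun w => not_lt.1 fun hw => ?_⟩
    exact hc.2 ((Prod.Lex.toLex_lt_toLex (x := (0, z)) (y := (0, w))).2 (Or.inr ⟨rfl, hw⟩))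
      ((Prod.Lex.toLex_lt_toLex (x := (0, w)) (y := (1, m))).2 (Or.inl one_pos))

theorem hasMin_omega_iff : HasMin (ℕ ×ₗ α) ↔ HasMin α := by
  constructor
  · rintro ⟨⟨k, z⟩, hz⟩
    refine ⟨z, fun x => ?_⟩
    have h1 := (Prod.Lex.toLex_le_toLex (x := (k, z)) (y := (k, x))).1 (hz (toLex (k, x)))
    rcases h1 with h1 | ⟨-, h1'⟩
    · omega
    · exact h1'
  · rintro ⟨m, hm⟩
    refine ⟨toLex (0, m), ?_⟩
    rintro ⟨k, x⟩
    refine (Prod.Lex.toLex_le_toLex (x := (0, m)) (y := (k, x))).2 ?_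
    rcases Nat.eq_zero_or_pos k with rfl | hk
    · exact Or.inr ⟨rfl, hm x⟩
    · exact Or.inl hk

theorem not_hasMax_omega : ¬ HasMax (ℕ ×ₗ α) := by
  rintro ⟨⟨k, z⟩, hz⟩
  have := (Prod.Lex.toLex_le_toLex (x := (k + 1, z)) (y := (k, z))).1 (hz (toLex (k + 1, z)))
  rcases this with h | ⟨h, -⟩ <;> omega
end ProdLemmas

section DualLemmas
variable {α β : Type*} [LinearOrder α] [LinearOrder β]

theorem hasMin_iso_iff (e : α ≃o β) : HasMin α ↔ HasMin β :=
  ⟨hasMin_of_iso e, hasMin_of_iso e.symm⟩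

theorem hasMax_iso_iff (e : α ≃o β) : HasMax α ↔ HasMax β :=
  ⟨hasMax_of_iso e, hasMax_of_iso e.symm⟩

theorem discrete_iso_iff (e : α ≃o β) : IsDiscreteLO α ↔ IsDiscreteLO β :=
  ⟨discrete_of_iso e, discrete_of_iso e.symm⟩

theorem hasMin_dual_iff : HasMin αᵒᵈ ↔ HasMax α := Iff.rfl
theorem hasMax_dual_iff : HasMax αᵒᵈ ↔ HasMin α := Iff.rfl

theorem isDiscrete_dual (h : IsDiscreteLO α) : IsDiscreteLO αᵒᵈ := by
  constructor
  · intro a ⟨b, hb⟩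
    obtain ⟨c, hc⟩ := h.2 (OrderDual.ofDual a) ⟨OrderDual.ofDual b, by exact hb⟩
    exact ⟨OrderDual.toDual c, by exact hc.1, fun d h1 h2 => hc.2 (by exact h2) (by exact h1)⟩
  · intro a ⟨b, hb⟩
    obtain ⟨c, hc⟩ := h.1 (OrderDual.ofDual a) ⟨OrderDual.ofDual b, by exact hb⟩
    exact ⟨OrderDual.toDual c, by exact hc.1, fun d h1 h2 => hc.2 (by exact h2) (by exact h1)⟩

theorem isDiscrete_of_dual (h : IsDiscreteLO αᵒᵈ) : IsDiscreteLO α := by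
  constructor
  · intro a ⟨b, hb⟩
    obtain ⟨c, hc⟩ := h.2 (OrderDual.toDual a) ⟨OrderDual.toDual b, by exact hb⟩
    exact ⟨OrderDual.ofDual c, by exact hc.1, fun d h1 h2 => hc.2 (by exact h2) (by exact h1)⟩
  · intro a ⟨b, hb⟩
    obtain ⟨c, hc⟩ := h.1 (OrderDual.toDual a) ⟨OrderDual.toDual b, by exact hb⟩
    exact ⟨OrderDual.ofDual c, by exact hc.1, fun d h1 h2 => hc.2 (by exact h2) (by exact h1)⟩

theorem isDiscrete_dual_iff : IsDiscreteLO αᵒᵈ ↔ IsDiscreteLO α :=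
  ⟨isDiscrete_of_dual, isDiscrete_dual⟩

def omegaStarIso (α : Type*) [LinearOrder α] : (ℕᵒᵈ ×ₗ α) ≃o (ℕ ×ₗ αᵒᵈ)ᵒᵈ where
  toFun x := OrderDual.toDual
    (toLex (OrderDual.ofDual (ofLex x).1, OrderDual.toDual (ofLex x).2))
  invFun y := toLex (OrderDual.toDual (ofLex (OrderDual.ofDual y)).1,
    OrderDual.ofDual (ofLex (OrderDual.ofDual y)).2)
  left_inv x := rfl
  right_inv y := rfl
  map_rel_iff' := by
    rintro ⟨n, x⟩ ⟨m, y⟩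
    show OrderDual.toDual (toLex ((OrderDual.ofDual n : ℕ), OrderDual.toDual x)) ≤
        OrderDual.toDual (toLex ((OrderDual.ofDual m : ℕ), OrderDual.toDual y)) ↔
      toLex (n, x) ≤ toLex (m, y)
    rw [OrderDual.toDual_le_toDual, Prod.Lex.le_iff, Prod.Lex.le_iff]
    constructor
    · rintro (hh | ⟨hh, hh'⟩)
      · exact Or.inl (by exact hh)
      · exact Or.inr ⟨by exact hh.symm, by exact hh'⟩
    · rintro (hh | ⟨hh, hh'⟩)
      · exact Or.inl (by exact hh)
      · exact Or.inr ⟨by exact hh.symm, by exact hh'⟩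

theorem isDiscrete_omegaStar (hd : IsDiscreteLO α) (hmin : HasMin α) (hmax : HasMax α) :
    IsDiscreteLO (ℕᵒᵈ ×ₗ α) := by
  refine discrete_of_iso (omegaStarIso α).symm ?_
  refine isDiscrete_dual ?_
  exact isDiscrete_omega (isDiscrete_dual hd) (hasMin_dual_iff.2 hmax) (hasMax_dual_iff.2 hmin)

theorem isDiscrete_omegaStar_inv (h : IsDiscreteLO (ℕᵒᵈ ×ₗ α)) :
    IsDiscreteLO α ∧ (HasMax α ↔ HasMin α) := by
  have h1 : IsDiscreteLO (ℕ ×ₗ αᵒᵈ) :=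
    isDiscrete_dual_iff.1 (discrete_of_iso (omegaStarIso α) h)
  obtain ⟨h2, h3⟩ := isDiscrete_omega_inv h1
  exact ⟨isDiscrete_dual_iff.1 h2, ⟨fun hh => by exact h3.2 hh, fun hh => by exact h3.1 hh⟩⟩

theorem hasMax_omegaStar_iff : HasMax (ℕᵒᵈ ×ₗ α) ↔ HasMax α :=
  (hasMax_iso_iff (omegaStarIso α)).trans
    (hasMax_dual_iff.trans (hasMin_omega_iff.trans hasMin_dual_iff))

theorem not_hasMin_omegaStar : ¬ HasMin (ℕᵒᵈ ×ₗ α) := fun h =>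
  not_hasMax_omega (hasMin_dual_iff.1 ((hasMin_iso_iff (omegaStarIso α)).1 h))

instance prodLexIsEmpty (γ : Type*) [IsEmpty α] : IsEmpty (γ ×ₗ α) :=
  ⟨fun x => IsEmpty.false (ofLex x).2⟩

theorem nonempty_omega (h : Nonempty α) : Nonempty (ℕ ×ₗ α) := by
  obtain ⟨a⟩ := h; exact ⟨toLex (0, a)⟩

theorem nonempty_omegaStar (h : Nonempty α) : Nonempty (ℕᵒᵈ ×ₗ α) := by
  obtain ⟨a⟩ := h; exact ⟨toLex (OrderDual.toDual 0, a)⟩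
end DualLemmas


section Bundle
open OrderDual

theorem dlo11_iso {X Y : BLinOrd} (e : X.carrier ≃o Y.carrier) (h : dLOfp11 X) : dLOfp11 Y :=
  ⟨LOfp.iso h.1 ⟨e⟩, discrete_of_iso e h.2.1, hasMin_of_iso e h.2.2.1, hasMax_of_iso e h.2.2.2⟩

theorem dlo11_nonempty {X : BLinOrd} (h : dLOfp11 X) : Nonempty X.carrier :=
  ⟨h.2.2.1.choose⟩

/-- sum of two dlo11-or-empty orders is dlo11-or-empty -/
theorem de_sum {B B' : BLinOrd} (hB : dLOfp11 B ∨ IsEmpty B.carrier)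
    (hB' : dLOfp11 B' ∨ IsEmpty B'.carrier) :
    dLOfp11 (BLinOrd.of (B.carrier ⊕ₗ B'.carrier)) ∨
      IsEmpty (BLinOrd.of (B.carrier ⊕ₗ B'.carrier)).carrier := by
  rcases hB with hB | hBe
  · rcases hB' with hB' | hB'e
    · refine Or.inl ⟨LOfp.add hB.1 hB'.1, ?_, ?_, ?_⟩
      · exact isDiscrete_sum hB.2.1 hB'.2.1
          (fun _ _ => iff_of_true hB.2.2.2 hB'.2.2.1)
      · exact hasMin_sum_of_left hB.2.2.1
      · exact hasMax_sum_of_right hB'.2.2.2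
    · haveI := hB'e
      exact Or.inl (dlo11_iso (oSumEmptyRight B.carrier B'.carrier).symm hB)
  · haveI := hBe
    rcases hB' with hB' | hB'e
    · exact Or.inl (dlo11_iso (oSumEmptyLeft B.carrier B'.carrier).symm hB')
    · haveI := hB'e
      exact Or.inr (by exact sumLexIsEmpty)

/-- `C·ω + (A·ω* + B)` is dlo11. -/
theorem dlo11_O {C A B : BLinOrd} (hC : dLOfp11 C) (hA : dLOfp11 A)
    (hB : dLOfp11 B ∨ IsEmpty B.carrier) :
    dLOfp11 (BLinOrd.of ((ℕ ×ₗ C.carrier) ⊕ₗ ((ℕᵒᵈ ×ₗ A.carrier) ⊕ₗ B.carrier))) := by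
  have hCne : Nonempty C.carrier := dlo11_nonempty hC
  have hAne : Nonempty A.carrier := dlo11_nonempty hA
  have discCω : IsDiscreteLO (ℕ ×ₗ C.carrier) := isDiscrete_omega hC.2.1 hC.2.2.1 hC.2.2.2
  have discAω : IsDiscreteLO (ℕᵒᵈ ×ₗ A.carrier) := isDiscrete_omegaStar hA.2.1 hA.2.2.1 hA.2.2.2
  rcases hB with hB | hBe
  · refine ⟨LOfp.add (LOfp.mulOmega hC.1) (LOfp.add (LOfp.mulOmegaStar hA.1) hB.1), ?_, ?_, ?_⟩
    · refine isDiscrete_sum discCω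
        (isDiscrete_sum discAω hB.2.1
          (fun _ _ => iff_of_true (hasMax_omegaStar_iff.2 hA.2.2.2) hB.2.2.1))
        (fun _ _ => iff_of_false not_hasMax_omega ?_)
      intro hm
      exact not_hasMin_omegaStar ((hasMin_sum_left (nonempty_omegaStar hAne)).1 hm)
    · exact hasMin_sum_of_left (hasMin_omega_iff.2 hC.2.2.1)
    · exact hasMax_sum_of_right (hasMax_sum_of_right hB.2.2.2)
  · haveI := hBe
    have base : dLOfp11 (BLinOrd.of ((ℕ ×ₗ C.carrier) ⊕ₗ (ℕᵒᵈ ×ₗ A.carrier))) := by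
      refine ⟨LOfp.add (LOfp.mulOmega hC.1) (LOfp.mulOmegaStar hA.1), ?_, ?_, ?_⟩
      · exact isDiscrete_sum discCω discAω
          (fun _ _ => iff_of_false not_hasMax_omega not_hasMin_omegaStar)
      · exact hasMin_sum_of_left (hasMin_omega_iff.2 hC.2.2.1)
      · exact hasMax_sum_of_right (hasMax_omegaStar_iff.2 hA.2.2.2)
    exact dlo11_iso
      (oSumCongr (OrderIso.refl (ℕ ×ₗ C.carrier))
        (oSumEmptyRight (ℕᵒᵈ ×ₗ A.carrier) B.carrier).symm) base

/-- `(B + C·ω) + A·ω*` is dlo11. -/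
theorem dlo11_O' {B C A : BLinOrd} (hB : dLOfp11 B ∨ IsEmpty B.carrier)
    (hC : dLOfp11 C) (hA : dLOfp11 A) :
    dLOfp11 (BLinOrd.of ((B.carrier ⊕ₗ (ℕ ×ₗ C.carrier)) ⊕ₗ (ℕᵒᵈ ×ₗ A.carrier))) := by
  have hCne : Nonempty C.carrier := dlo11_nonempty hC
  have hAne : Nonempty A.carrier := dlo11_nonempty hA
  have discCω : IsDiscreteLO (ℕ ×ₗ C.carrier) := isDiscrete_omega hC.2.1 hC.2.2.1 hC.2.2.2
  have discAω : IsDiscreteLO (ℕᵒᵈ ×ₗ A.carrier) := isDiscrete_omegaStar hA.2.1 hA.2.2.1 hA.2.2.2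
  rcases hB with hB | hBe
  · refine ⟨LOfp.add (LOfp.add hB.1 (LOfp.mulOmega hC.1)) (LOfp.mulOmegaStar hA.1), ?_, ?_, ?_⟩
    · refine isDiscrete_sum
        (isDiscrete_sum hB.2.1 discCω
          (fun _ _ => iff_of_true hB.2.2.2 (hasMin_omega_iff.2 hC.2.2.1)))
        discAω (fun _ _ => iff_of_false ?_ not_hasMin_omegaStar)
      intro hm
      exact not_hasMax_omega ((hasMax_sum_right (nonempty_omega hCne)).1 hm)
    · exact hasMin_sum_of_left (hasMin_sum_of_left hB.2.2.1)
    · exact hasMax_sum_of_right (hasMax_omegaStar_iff.2 hA.2.2.2)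
  · haveI := hBe
    have base : dLOfp11 (BLinOrd.of ((ℕ ×ₗ C.carrier) ⊕ₗ (ℕᵒᵈ ×ₗ A.carrier))) := by
      refine ⟨LOfp.add (LOfp.mulOmega hC.1) (LOfp.mulOmegaStar hA.1), ?_, ?_, ?_⟩
      · exact isDiscrete_sum discCω discAω
          (fun _ _ => iff_of_false not_hasMax_omega not_hasMin_omegaStar)
      · exact hasMin_sum_of_left (hasMin_omega_iff.2 hC.2.2.1)
      · exact hasMax_sum_of_right (hasMax_omegaStar_iff.2 hA.2.2.2)
    exact dlo11_iso
      (oSumCongr (oSumEmptyLeft B.carrier (ℕ ×ₗ C.carrier)).symm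
        (OrderIso.refl (ℕᵒᵈ ×ₗ A.carrier))) base

/-- left-pad a dlo11 by a dlo11-or-empty. -/
theorem dlo11_pad {B O : BLinOrd} (hB : dLOfp11 B ∨ IsEmpty B.carrier) (hO : dLOfp11 O) :
    dLOfp11 (BLinOrd.of (B.carrier ⊕ₗ O.carrier)) := by
  rcases hB with hB | hBe
  · refine ⟨LOfp.add hB.1 hO.1, ?_, ?_, ?_⟩
    · exact isDiscrete_sum hB.2.1 hO.2.1 (fun _ _ => iff_of_true hB.2.2.2 hO.2.2.1)
    · exact hasMin_sum_of_left hB.2.2.1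
    · exact hasMax_sum_of_right hO.2.2.2
  · haveI := hBe
    exact dlo11_iso (oSumEmptyLeft B.carrier O.carrier).symm hO
end Bundle

theorem hasMin_fin1 : HasMin (Fin 1) := ⟨0, fun x => le_of_eq (Subsingleton.elim 0 x)⟩
theorem hasMax_fin1 : HasMax (Fin 1) := ⟨0, fun x => le_of_eq (Subsingleton.elim x 0)⟩

theorem dlo11_one : dLOfp11 (BLinOrd.of (Fin 1)) := by
  refine ⟨LOfp.one, ?_, hasMin_fin1, hasMax_fin1⟩
  show IsDiscreteLO (Fin 1)
  constructor
  · rintro a ⟨b, hb⟩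
    exact absurd hb (by rw [Subsingleton.elim a b]; exact lt_irrefl b)
  · rintro a ⟨b, hb⟩
    exact absurd hb (by rw [Subsingleton.elim a b]; exact lt_irrefl b)

theorem main_decomp : ∀ X : BLinOrd, LOfp X → IsDiscreteLO X.carrier → Nonempty X.carrier →
    ∃ A B C : BLinOrd,
      (dLOfp11 A ∨ IsEmpty A.carrier) ∧ (dLOfp11 B ∨ IsEmpty B.carrier) ∧
      (dLOfp11 C ∨ IsEmpty C.carrier) ∧
      (HasMin X.carrier ↔ IsEmpty A.carrier) ∧ (HasMax X.carrier ↔ IsEmpty C.carrier) ∧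
      Nonempty (X.carrier ≃o ((ℕᵒᵈ ×ₗ A.carrier) ⊕ₗ (B.carrier ⊕ₗ (ℕ ×ₗ C.carrier)))) := by
  intro X hfp
  induction hfp with
  | empty =>
    intro _ hne
    exact (hne.elim fun x => x.elim0)
  | one =>
    intro _ _
    refine ⟨.of (Fin 0), .of (Fin 1), .of (Fin 0), Or.inr (inferInstanceAs (IsEmpty (Fin 0))),
      Or.inl dlo11_one, Or.inr (inferInstanceAs (IsEmpty (Fin 0))),
      iff_of_true hasMin_fin1 (inferInstanceAs (IsEmpty (Fin 0))),
      iff_of_true hasMax_fin1 (inferInstanceAs (IsEmpty (Fin 0))), ?_⟩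
    exact ⟨((oSumEmptyLeft (ℕᵒᵈ ×ₗ Fin 0) (Fin 1 ⊕ₗ ℕ ×ₗ Fin 0)).trans
      (oSumEmptyRight (Fin 1) (ℕ ×ₗ Fin 0))).symm⟩
  | @iso X Y hX hiso ih =>
    intro hdY hneY
    obtain ⟨e⟩ := hiso
    have hdX : IsDiscreteLO X.carrier := discrete_of_iso e.symm hdY
    have hneX : Nonempty X.carrier := ⟨e.symm hneY.some⟩
    obtain ⟨A, B, C, hA, hB, hC, hmin, hmax, ⟨f⟩⟩ := ih hdX hneX
    exact ⟨A, B, C, hA, hB, hC, (hasMin_iso_iff e.symm).trans hmin,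
      (hasMax_iso_iff e.symm).trans hmax, ⟨e.symm.trans f⟩⟩
  | @add X Y hfpX hfpY ihX ihY =>
    intro hd hne
    obtain ⟨hdX, hdY, hj⟩ := isDiscrete_sum_inv hd
    rcases isEmpty_or_nonempty X.carrier with hXe | hXne
    · haveI := hXe
      have e : (X.carrier ⊕ₗ Y.carrier) ≃o Y.carrier := oSumEmptyLeft _ _
      have hneY : Nonempty Y.carrier := ⟨e hne.some⟩
      obtain ⟨A, B, C, hA, hB, hC, hmin, hmax, ⟨f⟩⟩ := ihY hdY hneY
      exact ⟨A, B, C, hA, hB, hC, (hasMin_iso_iff e).trans hmin,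
        (hasMax_iso_iff e).trans hmax, ⟨e.trans f⟩⟩
    rcases isEmpty_or_nonempty Y.carrier with hYe | hYne
    · haveI := hYe
      have e : (X.carrier ⊕ₗ Y.carrier) ≃o X.carrier := oSumEmptyRight _ _
      obtain ⟨A, B, C, hA, hB, hC, hmin, hmax, ⟨f⟩⟩ := ihX hdX ⟨e hne.some⟩
      exact ⟨A, B, C, hA, hB, hC, (hasMin_iso_iff e).trans hmin,
        (hasMax_iso_iff e).trans hmax, ⟨e.trans f⟩⟩
    obtain ⟨A, B, C, hA, hB, hC, hminX, hmaxX, ⟨f⟩⟩ := ihX hdX hXne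
    obtain ⟨A', B', C', hA', hB', hC', hminY, hmaxY, ⟨g⟩⟩ := ihY hdY hYne
    have hjunc : HasMax X.carrier ↔ HasMin Y.carrier := hj hXne hYne
    have hminS : HasMin (X.carrier ⊕ₗ Y.carrier) ↔ IsEmpty A.carrier :=
      (hasMin_sum_left hXne).trans hminX
    have hmaxS : HasMax (X.carrier ⊕ₗ Y.carrier) ↔ IsEmpty C'.carrier :=
      (hasMax_sum_right hYne).trans hmaxY
    rcases hC with hC11 | hCe
    · -- C nonempty: X has no max, hence Y has no min, hence A' nonempty
      have hCne : ¬ IsEmpty C.carrier := fun h => h.false (dlo11_nonempty hC11).some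
      have hXnomax : ¬ HasMax X.carrier := fun h => hCne (hmaxX.1 h)
      rcases hA' with hA'11 | hA'e
      · have hM : dLOfp11 (BLinOrd.of (B.carrier ⊕ₗ
            ((ℕ ×ₗ C.carrier) ⊕ₗ ((ℕᵒᵈ ×ₗ A'.carrier) ⊕ₗ B'.carrier)))) :=
          dlo11_pad hB (dlo11_O hC11 hA'11 hB')
        refine ⟨A, BLinOrd.of (B.carrier ⊕ₗ
            ((ℕ ×ₗ C.carrier) ⊕ₗ ((ℕᵒᵈ ×ₗ A'.carrier) ⊕ₗ B'.carrier))), C',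
          hA, Or.inl hM, hC', hminS, hmaxS, ?_⟩
        refine ⟨(oSumCongr f g).trans ?_⟩
        exact (OrderIso.sumLexAssoc _ _ _).trans
          (oSumCongr (OrderIso.refl _)
            ((OrderIso.sumLexAssoc _ _ _).trans
              ((oSumCongr (OrderIso.refl _)
                ((oSumCongr (OrderIso.refl _) (OrderIso.sumLexAssoc _ _ _).symm).trans
                  (OrderIso.sumLexAssoc _ _ _).symm)).trans
                (OrderIso.sumLexAssoc _ _ _).symm)))
      · exact absurd (hjunc.2 (hminY.2 hA'e)) hXnomax
    · rcases hA' with hA'11 | hA'e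
      · have hA'ne : ¬ IsEmpty A'.carrier := fun h => h.false (dlo11_nonempty hA'11).some
        exact absurd (hminY.1 (hjunc.1 (hmaxX.2 hCe))) hA'ne
      · haveI := hCe
        haveI := hA'e
        refine ⟨A, BLinOrd.of (B.carrier ⊕ₗ B'.carrier), C', hA, de_sum hB hB', hC',
          hminS, hmaxS, ?_⟩
        refine ⟨(oSumCongr f g).trans ?_⟩
        exact (oSumCongr (oSumCongr (OrderIso.refl _) (oSumEmptyRight _ _))
            (oSumEmptyLeft _ _)).trans
          ((OrderIso.sumLexAssoc (ℕᵒᵈ ×ₗ A.carrier) B.carrier (B'.carrier ⊕ₗ (ℕ ×ₗ C'.carrier))).trans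
            (oSumCongr (OrderIso.refl _) (OrderIso.sumLexAssoc B.carrier B'.carrier (ℕ ×ₗ C'.carrier)).symm))
  | @mulOmega X hfpX ih =>
    intro hd hne
    have hneX : Nonempty X.carrier := ⟨(ofLex hne.some).2⟩
    obtain ⟨hdX, hmm⟩ := isDiscrete_omega_inv hd
    by_cases hmin : HasMin X.carrier
    · have hmax : HasMax X.carrier := hmm.2 hmin
      refine ⟨.of (Fin 0), .of (Fin 0), X, Or.inr (inferInstanceAs (IsEmpty (Fin 0))),
        Or.inr (inferInstanceAs (IsEmpty (Fin 0))), Or.inl ⟨hfpX, hdX, hmin, hmax⟩,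
        iff_of_true (hasMin_omega_iff.2 hmin) (inferInstanceAs (IsEmpty (Fin 0))),
        iff_of_false not_hasMax_omega (not_isEmpty_of_nonempty _), ?_⟩
      exact ⟨((oSumEmptyLeft (ℕᵒᵈ ×ₗ Fin 0) ((Fin 0) ⊕ₗ ℕ ×ₗ X.carrier)).trans
        (oSumEmptyLeft (Fin 0) (ℕ ×ₗ X.carrier))).symm⟩
    · have hmax : ¬ HasMax X.carrier := fun h => hmin (hmm.1 h)
      obtain ⟨A, B, C, hA, hB, hC, hminX, hmaxX, ⟨f⟩⟩ := ih hdX hneX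
      have hA11 : dLOfp11 A := by
        rcases hA with hA | hAe
        · exact hA
        · exact absurd (hminX.2 hAe) hmin
      have hC11 : dLOfp11 C := by
        rcases hC with hC | hCe
        · exact hC
        · exact absurd (hmaxX.2 hCe) hmax
      have hD : dLOfp11 (BLinOrd.of ((ℕ ×ₗ C.carrier) ⊕ₗ ((ℕᵒᵈ ×ₗ A.carrier) ⊕ₗ B.carrier))) :=
        dlo11_O hC11 hA11 hB
      refine ⟨A, B, BLinOrd.of ((ℕ ×ₗ C.carrier) ⊕ₗ ((ℕᵒᵈ ×ₗ A.carrier) ⊕ₗ B.carrier)),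
        Or.inl hA11, hB, Or.inl hD,
        iff_of_false (fun h => hmin (hasMin_omega_iff.1 h))
          (fun h => hmin (hminX.2 h)),
        iff_of_false not_hasMax_omega (fun h => h.false (dlo11_nonempty hD).some), ?_⟩
      have g1 : X.carrier ≃o ((ℕᵒᵈ ×ₗ A.carrier) ⊕ₗ B.carrier) ⊕ₗ (ℕ ×ₗ C.carrier) :=
        f.trans (OrderIso.sumLexAssoc (ℕᵒᵈ ×ₗ A.carrier) B.carrier (ℕ ×ₗ C.carrier)).symm
      exact ⟨(oProdCongr ℕ g1).trans
        ((rotOmega ((ℕᵒᵈ ×ₗ A.carrier) ⊕ₗ B.carrier) (ℕ ×ₗ C.carrier)).trans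
          (OrderIso.sumLexAssoc _ _ _))⟩
  | @mulOmegaStar X hfpX ih =>
    intro hd hne
    have hneX : Nonempty X.carrier := ⟨(ofLex hne.some).2⟩
    obtain ⟨hdX, hmm⟩ := isDiscrete_omegaStar_inv hd
    by_cases hmax : HasMax X.carrier
    · have hmin : HasMin X.carrier := hmm.1 hmax
      haveI : IsEmpty ((Fin 0) ⊕ₗ (ℕ ×ₗ Fin 0)) := by exact sumLexIsEmpty
      refine ⟨X, .of (Fin 0), .of (Fin 0), Or.inl ⟨hfpX, hdX, hmin, hmax⟩,
        Or.inr (inferInstanceAs (IsEmpty (Fin 0))), Or.inr (inferInstanceAs (IsEmpty (Fin 0))),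
        iff_of_false not_hasMin_omegaStar (not_isEmpty_of_nonempty _),
        iff_of_true (hasMax_omegaStar_iff.2 hmax) (inferInstanceAs (IsEmpty (Fin 0))), ?_⟩
      exact ⟨(oSumEmptyRight (ℕᵒᵈ ×ₗ X.carrier) ((Fin 0) ⊕ₗ (ℕ ×ₗ Fin 0))).symm⟩
    · have hmin : ¬ HasMin X.carrier := fun h => hmax (hmm.2 h)
      obtain ⟨A, B, C, hA, hB, hC, hminX, hmaxX, ⟨f⟩⟩ := ih hdX hneX
      have hA11 : dLOfp11 A := by
        rcases hA with hA | hAe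
        · exact hA
        · exact absurd (hminX.2 hAe) hmin
      have hC11 : dLOfp11 C := by
        rcases hC with hC | hCe
        · exact hC
        · exact absurd (hmaxX.2 hCe) hmax
      have hD : dLOfp11 (BLinOrd.of ((B.carrier ⊕ₗ (ℕ ×ₗ C.carrier)) ⊕ₗ (ℕᵒᵈ ×ₗ A.carrier))) :=
        dlo11_O' hB hC11 hA11
      refine ⟨BLinOrd.of ((B.carrier ⊕ₗ (ℕ ×ₗ C.carrier)) ⊕ₗ (ℕᵒᵈ ×ₗ A.carrier)), B, C,
        Or.inl hD, hB, hC,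
        iff_of_false not_hasMin_omegaStar (fun h => h.false (dlo11_nonempty hD).some),
        hasMax_omegaStar_iff.trans hmaxX, ?_⟩
      exact ⟨(oProdCongr ℕᵒᵈ f).trans
        (rotOmegaStar (ℕᵒᵈ ×ₗ A.carrier) (B.carrier ⊕ₗ (ℕ ×ₗ C.carrier)))⟩

/-- a nonempty discrete finitely presented linear order with no minimum and
no maximum is isomorphic to `L₁·ω* + L₂ + L₃·ω` with `L₁, L₃ ∈ dLO_fp¹¹` and
`L₂ ∈ dLO_fp¹¹ ∪ {𝟎}`. -/
theorem dLOfp00_structure (X : BLinOrd) (hne : Nonempty X.carrier) (hfp : LOfp X)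
    (hdisc : IsDiscreteLO X.carrier)
    (hnomin : ∀ a : X.carrier, ∃ b, b < a)
    (hnomax : ∀ a : X.carrier, ∃ b, a < b) :
    ∃ L1 L2 L3 : BLinOrd, dLOfp11 L1 ∧ dLOfp11 L3 ∧
      (dLOfp11 L2 ∨ IsEmpty L2.carrier) ∧
      Nonempty (X.carrier ≃o
        ((ℕᵒᵈ ×ₗ L1.carrier) ⊕ₗ (L2.carrier ⊕ₗ (ℕ ×ₗ L3.carrier)))) := by
  obtain ⟨A, B, C, hA, hB, hC, hmin, hmax, hiso⟩ := main_decomp X hfp hdisc hne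
  have hnm : ¬ HasMin X.carrier := by
    rintro ⟨a, ha⟩
    obtain ⟨b, hb⟩ := hnomin a
    exact absurd (ha b) (not_le.2 hb)
  have hnM : ¬ HasMax X.carrier := by
    rintro ⟨a, ha⟩
    obtain ⟨b, hb⟩ := hnomax a
    exact absurd (ha b) (not_le.2 hb)
  have hA11 : dLOfp11 A := by
    rcases hA with hA | hAe
    · exact hA
    · exact absurd (hmin.2 hAe) hnm
  have hC11 : dLOfp11 C := by
    rcases hC with hC | hCe
    · exact hC
    · exact absurd (hmax.2 hCe) hnM
  exact ⟨A, B, C, hA11, hC11, hB, hiso⟩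
end
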